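/- arXiv:2508.03667 — 2 statements merged into one kernel-verified Lean document; each statement's English description precedes it below -/
import Mathlib

section
/- Let R be a Γ-graded ring and M a Γ-graded right R-module. The following are equivalent: (1) M is gr-semisimple and finitely generated; (2) M is gr-semisimple and gr-noetherian; (3) M is gr-semisimple and gr-artinian; (4) M is gr-semisimple and finitely gr-cogenerated; (5) M is a finite direct sum of gr-simple graded submodules; (6) rad^gr(M) = 0 and M is finitely gr-cogenerated; (7) rad^gr(M) = 0 and M is gr-artinian. -/
open CategoryTheory

universe u

instance addSubgroupNormalOfComm {M : Type*} [AddCommGroup M] (N : AddSubgroup M) :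
    N.Normal := ⟨fun n hn g => by simpa [add_comm] using hn⟩

variable {Γ : Type u} [Groupoid.{u} Γ]

/-- The morphisms of the groupoid `Γ`, bundled together with their endpoints.
For `γ : GrIdx Γ`, the morphism `γ.2.2 : γ.1 ⟶ γ.2.1` has domain `d(γ) = γ.1`
and range `r(γ) = γ.2.1`. -/
abbrev GrIdx (Γ : Type u) [Groupoid.{u} Γ] : Type u := Σ e f : Γ, e ⟶ f

/-- The data of a `Γ`-grading, a multiplication, and local units `1_e` on an
additive group `R`. -/
structure GRingData (Γ : Type u) [Groupoid.{u} Γ] (R : Type u) [AddCommGroup R] :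
    Type u where
  mul : R → R → R
  component : ∀ {e f : Γ}, (e ⟶ f) → AddSubgroup R
  one : Γ → R

/-- The data of a right scalar multiplication by `R` and a `Γ`-grading on an
additive group `M`. -/
structure GModData (Γ : Type u) [Groupoid.{u} Γ] (R : Type u) (M : Type u)
    [AddCommGroup M] : Type u where
  smul : M → R → M
  component : ∀ {e f : Γ}, (e ⟶ f) → AddSubgroup M

namespace GRingData

variable {R : Type u} [AddCommGroup R]

/-- `𝒜` makes `R` an (object unital) `Γ`-graded ring: `R` is an associative ring,
`R = ⊕_γ R_γ`, `R_γ R_δ ⊆ R_{γδ}` when `γδ` is defined and `R_γ R_δ = 0` otherwise,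
each `R_e` (`e ∈ Γ₀`) is unital with identity `1_e`, and
`1_{r(γ)} a = a 1_{d(γ)} = a` for all `a ∈ R_γ`. -/
structure IsObjectUnital (𝒜 : GRingData Γ R) : Prop where
  mul_assoc : ∀ a b c : R, 𝒜.mul (𝒜.mul a b) c = 𝒜.mul a (𝒜.mul b c)
  left_distrib : ∀ a b c : R, 𝒜.mul a (b + c) = 𝒜.mul a b + 𝒜.mul a c
  right_distrib : ∀ a b c : R, 𝒜.mul (a + b) c = 𝒜.mul a c + 𝒜.mul b c
  decompose : ∀ x : R, ∃ (s : Finset (GrIdx Γ)) (cf : GrIdx Γ → R),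
      (∀ γ ∈ s, cf γ ∈ 𝒜.component γ.2.2) ∧ x = ∑ γ ∈ s, cf γ
  independent : ∀ (s : Finset (GrIdx Γ)) (cf : GrIdx Γ → R),
      (∀ γ ∈ s, cf γ ∈ 𝒜.component γ.2.2) → ∑ γ ∈ s, cf γ = 0 → ∀ γ ∈ s, cf γ = 0
  mul_mem : ∀ {e f g : Γ} (γ : e ⟶ f) (δ : g ⟶ e) {a b : R},
      a ∈ 𝒜.component γ → b ∈ 𝒜.component δ → 𝒜.mul a b ∈ 𝒜.component (δ ≫ γ)
  mul_eq_zero : ∀ {e f g h : Γ} (γ : e ⟶ f) (δ : g ⟶ h) {a b : R},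
      h ≠ e → a ∈ 𝒜.component γ → b ∈ 𝒜.component δ → 𝒜.mul a b = 0
  one_mem : ∀ e : Γ, 𝒜.one e ∈ 𝒜.component (𝟙 e)
  one_mul : ∀ {e f : Γ} (γ : e ⟶ f) {a : R}, a ∈ 𝒜.component γ → 𝒜.mul (𝒜.one f) a = a
  mul_one : ∀ {e f : Γ} (γ : e ⟶ f) {a : R}, a ∈ 𝒜.component γ → 𝒜.mul a (𝒜.one e) = a

/-- `R` regarded as a (`Γ`-graded) right module over itself. -/
def toMod (𝒜 : GRingData Γ R) : GModData Γ R R where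
  smul := 𝒜.mul
  component := fun γ => 𝒜.component γ

end GRingData

namespace GModData

variable {R : Type u} {M : Type u} {M' : Type u} [AddCommGroup M] [AddCommGroup M']

/-- `ℳ` makes `M` a unital `Γ`-graded right module over the `Γ`-graded ring `𝒜`:
`M` is a right `R`-module, `M = ⊕_γ M_γ`, `M_σ R_τ ⊆ M_{στ}` when `στ` is defined
and `M_σ R_τ = 0` otherwise, and `m 1_{d(σ)} = m` for all `m ∈ M_σ`. -/
structure IsGraded [AddCommGroup R] (𝒜 : GRingData Γ R) (ℳ : GModData Γ R M) :
    Prop where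
  add_smul : ∀ (m n : M) (a : R), ℳ.smul (m + n) a = ℳ.smul m a + ℳ.smul n a
  smul_add : ∀ (m : M) (a b : R), ℳ.smul m (a + b) = ℳ.smul m a + ℳ.smul m b
  smul_mul : ∀ (m : M) (a b : R), ℳ.smul m (𝒜.mul a b) = ℳ.smul (ℳ.smul m a) b
  decompose : ∀ x : M, ∃ (s : Finset (GrIdx Γ)) (cf : GrIdx Γ → M),
      (∀ γ ∈ s, cf γ ∈ ℳ.component γ.2.2) ∧ x = ∑ γ ∈ s, cf γ
  independent : ∀ (s : Finset (GrIdx Γ)) (cf : GrIdx Γ → M),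
      (∀ γ ∈ s, cf γ ∈ ℳ.component γ.2.2) → ∑ γ ∈ s, cf γ = 0 → ∀ γ ∈ s, cf γ = 0
  smul_mem : ∀ {e f g : Γ} (σ : e ⟶ f) (τ : g ⟶ e) {m : M} {a : R},
      m ∈ ℳ.component σ → a ∈ 𝒜.component τ → ℳ.smul m a ∈ ℳ.component (τ ≫ σ)
  smul_eq_zero : ∀ {e f g h : Γ} (σ : e ⟶ f) (τ : g ⟶ h) {m : M} {a : R},
      h ≠ e → m ∈ ℳ.component σ → a ∈ 𝒜.component τ → ℳ.smul m a = 0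
  smul_one : ∀ {e f : Γ} (σ : e ⟶ f) {m : M}, m ∈ ℳ.component σ →
      ℳ.smul m (𝒜.one e) = m

/-- An element of `M` is homogeneous if it belongs to some homogeneous component. -/
def IsHomogeneous (ℳ : GModData Γ R M) (m : M) : Prop :=
  ∃ (e f : Γ) (γ : e ⟶ f), m ∈ ℳ.component γ

/-- `N` is a graded submodule of `M`: a submodule (subgroup closed under the right
`R`-action) generated by its homogeneous elements, i.e. `N = ⊕_γ (N ∩ M_γ)`. -/
def IsGrSub (ℳ : GModData Γ R M) (N : AddSubgroup M) : Prop :=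
  (∀ m ∈ N, ∀ a : R, ℳ.smul m a ∈ N) ∧
  ∀ n ∈ N, n ∈ AddSubgroup.closure {x : M | x ∈ N ∧ ℳ.IsHomogeneous x}

/-- `M` is gr-noetherian: there is no strictly increasing infinite chain of graded
submodules. -/
def GrNoetherian (ℳ : GModData Γ R M) : Prop :=
  ¬ ∃ c : ℕ → AddSubgroup M, (∀ n, ℳ.IsGrSub (c n)) ∧ ∀ n, c n < c (n + 1)

/-- `M` is gr-artinian: there is no strictly decreasing infinite chain of graded
submodules. -/
def GrArtinian (ℳ : GModData Γ R M) : Prop :=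
  ¬ ∃ c : ℕ → AddSubgroup M, (∀ n, ℳ.IsGrSub (c n)) ∧ ∀ n, c (n + 1) < c n

/-- The `R`-submodule of `M` generated by a set `X`. -/
def rClosure (ℳ : GModData Γ R M) (X : Set M) : AddSubgroup M :=
  sInf {N : AddSubgroup M | X ⊆ N ∧ ∀ m ∈ N, ∀ a : R, ℳ.smul m a ∈ N}

/-- `M` is finitely generated (as a right `R`-module). -/
def FG (ℳ : GModData Γ R M) : Prop := ∃ s : Finset M, ℳ.rClosure ↑s = ⊤

/-- The submodule `N` of `M` is finitely generated. -/
def FGSub (ℳ : GModData Γ R M) (N : AddSubgroup M) : Prop :=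
  ∃ s : Finset M, ↑s ⊆ (N : Set M) ∧ ℳ.rClosure ↑s = N

/-- `M` is finitely gr-cogenerated: every family of graded submodules with zero
intersection has a finite subfamily with zero intersection. -/
def FinGrCogenerated (ℳ : GModData Γ R M) : Prop :=
  ∀ S : Set (AddSubgroup M), (∀ N ∈ S, ℳ.IsGrSub N) → sInf S = ⊥ →
    ∃ t : Finset (AddSubgroup M), ↑t ⊆ S ∧ t.inf id = ⊥

/-- The quotient module `M/N`, with grading `(M/N)_γ = (M_γ + N)/N`. -/
noncomputable def quot (ℳ : GModData Γ R M) (N : AddSubgroup M) :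
    GModData Γ R (M ⧸ N) where
  smul x a := QuotientAddGroup.mk (ℳ.smul (Quotient.out x) a)
  component := fun γ => (ℳ.component γ).map (QuotientAddGroup.mk' N)

open scoped Classical in
/-- The submodule `N`, regarded as a `Γ`-graded right `R`-module. -/
noncomputable def restrict (ℳ : GModData Γ R M) (N : AddSubgroup M) :
    GModData Γ R ↥N where
  smul m a := if h : ℳ.smul (↑m) a ∈ N then ⟨ℳ.smul (↑m) a, h⟩ else 0
  component := fun γ => (ℳ.component γ).addSubgroupOf N

/-- The subquotient module `P/N` (for `N ≤ P` graded submodules of `M`). -/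
noncomputable def subquot (ℳ : GModData Γ R M) (N P : AddSubgroup M) :
    GModData Γ R (↥P ⧸ N.addSubgroupOf P) :=
  (ℳ.restrict P).quot (N.addSubgroupOf P)

/-- `M(e) = ⊕_{r(γ) = e} M_γ`, for `e ∈ Γ₀`. -/
def part (ℳ : GModData Γ R M) (e : Γ) : AddSubgroup M :=
  ⨆ (f : Γ) (γ : f ⟶ e), ℳ.component γ

/-- `Γ'₀(M) = {e ∈ Γ₀ : M(e) ≠ 0}`. -/
def partSupport (ℳ : GModData Γ R M) : Set Γ := {e : Γ | ℳ.part e ≠ ⊥}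

/-- `M` is `Γ₀`-noetherian: `M(e)` is gr-noetherian for every `e ∈ Γ₀`. -/
def G0Noetherian (ℳ : GModData Γ R M) : Prop :=
  ∀ e : Γ, (ℳ.restrict (ℳ.part e)).GrNoetherian

/-- `M` is `Γ₀`-artinian: `M(e)` is gr-artinian for every `e ∈ Γ₀`. -/
def G0Artinian (ℳ : GModData Γ R M) : Prop :=
  ∀ e : Γ, (ℳ.restrict (ℳ.part e)).GrArtinian

/-- `M` is gr-simple: `M ≠ 0` and its only graded submodules are `0` and `M`. -/
def IsGrSimple (ℳ : GModData Γ R M) : Prop :=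
  (⊤ : AddSubgroup M) ≠ ⊥ ∧ ∀ N : AddSubgroup M, ℳ.IsGrSub N → N = ⊥ ∨ N = ⊤

/-- `N` is a gr-simple graded submodule of `M`. -/
def IsGrSimpleSub (ℳ : GModData Γ R M) (N : AddSubgroup M) : Prop :=
  ℳ.IsGrSub N ∧ N ≠ ⊥ ∧
    ∀ L : AddSubgroup M, ℳ.IsGrSub L → L ≤ N → L = ⊥ ∨ L = N

/-- `N` is a gr-maximal graded submodule of `M`. -/
def IsGrMaximalSub (ℳ : GModData Γ R M) (N : AddSubgroup M) : Prop :=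
  ℳ.IsGrSub N ∧ N ≠ ⊤ ∧
    ∀ L : AddSubgroup M, ℳ.IsGrSub L → N ≤ L → L = N ∨ L = ⊤

/-- The graded Jacobson radical of `M`: the intersection of all gr-maximal graded
submodules of `M` (equal to `M` when there are none). -/
def grRad (ℳ : GModData Γ R M) : AddSubgroup M := sInf {N | ℳ.IsGrMaximalSub N}

/-- The gr-socle of `M`: the sum of all gr-simple graded submodules of `M`
(equal to `0` when there are none). -/
def grSoc (ℳ : GModData Γ R M) : AddSubgroup M := sSup {N | ℳ.IsGrSimpleSub N}

/-- `N` is gr-superfluous in `M`. -/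
def GrSuperfluous (ℳ : GModData Γ R M) (N : AddSubgroup M) : Prop :=
  ∀ X : AddSubgroup M, ℳ.IsGrSub X → N ⊔ X = ⊤ → X = ⊤

/-- `N` is gr-essential in `M`. -/
def GrEssential (ℳ : GModData Γ R M) (N : AddSubgroup M) : Prop :=
  ∀ X : AddSubgroup M, ℳ.IsGrSub X → N ⊓ X = ⊥ → X = ⊥

/-- `M` is gr-semisimple: the sum of all gr-simple graded submodules is `M`. -/
def GrSemisimple (ℳ : GModData Γ R M) : Prop :=
  sSup {N : AddSubgroup M | ℳ.IsGrSimpleSub N} = ⊤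

/-- `c 0 = 0 ⊆ c 1 ⊆ ⋯ ⊆ c n = M` is a gr-composition series of `M` of length `n`. -/
def IsGrCompSeries (ℳ : GModData Γ R M) (n : ℕ) (c : ℕ → AddSubgroup M) : Prop :=
  c 0 = ⊥ ∧ c n = ⊤ ∧ (∀ i, i ≤ n → ℳ.IsGrSub (c i)) ∧
  (∀ i, i < n → c i ≤ c (i + 1)) ∧
  ∀ i, i < n → (ℳ.subquot (c i) (c (i + 1))).IsGrSimple

/-- `M` has finite gr-length: it admits a gr-composition series. -/
def FiniteGrLength (ℳ : GModData Γ R M) : Prop := ∃ n c, ℳ.IsGrCompSeries n c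

/-- `g : M → M'` is a gr-homomorphism of graded right `R`-modules. -/
def IsGrHom (ℳ : GModData Γ R M) (𝒩 : GModData Γ R M') (g : M → M') : Prop :=
  (∀ m n : M, g (m + n) = g m + g n) ∧
  (∀ (m : M) (a : R), g (ℳ.smul m a) = 𝒩.smul (g m) a) ∧
  ∀ (e f : Γ) (σ : e ⟶ f), ∀ m ∈ ℳ.component σ, g m ∈ 𝒩.component σ

/-- `M` and `M'` are gr-isomorphic (there is a bijective gr-homomorphism). -/
def GrIso (ℳ : GModData Γ R M) (𝒩 : GModData Γ R M') : Prop :=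
  ∃ g : M → M', IsGrHom ℳ 𝒩 g ∧ Function.Bijective g

/-- `g : M → M'` is a homomorphism of degree `γ` (where `γ : e ⟶ f`, i.e.
`d(γ) = e`): `g(M_σ) ⊆ M'_{γσ}` when `γσ` is defined and `g(M_σ) = 0` otherwise. -/
def IsHomOfDeg (ℳ : GModData Γ R M) (𝒩 : GModData Γ R M') {e f : Γ} (γ : e ⟶ f)
    (g : M → M') : Prop :=
  (∀ m n : M, g (m + n) = g m + g n) ∧
  (∀ (m : M) (a : R), g (ℳ.smul m a) = 𝒩.smul (g m) a) ∧
  (∀ (a : Γ) (σ : a ⟶ e), ∀ m ∈ ℳ.component σ, g m ∈ 𝒩.component (σ ≫ γ)) ∧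
  (∀ (a b : Γ) (σ : a ⟶ b), b ≠ e → ∀ m ∈ ℳ.component σ, g m = 0)

/-- `MJ`: the submodule of `M` consisting of finite sums of elements `m a`,
`m ∈ M`, `a ∈ J`. -/
def smulSet [AddCommGroup R] (ℳ : GModData Γ R M) (J : AddSubgroup R) : AddSubgroup M :=
  AddSubgroup.closure {x : M | ∃ (m : M) (a : R), a ∈ J ∧ x = ℳ.smul m a}

open scoped Classical in
/-- The direct sum `⊕_{j ∈ J} M_j` of graded right modules, with grading
`(⊕_j M_j)_γ = ⊕_j (M_j)_γ`. -/
noncomputable def dsum {J : Type u} {Mf : J → Type u} [∀ j, AddCommGroup (Mf j)]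
    (df : ∀ j, GModData Γ R (Mf j)) : GModData Γ R (Π₀ j, Mf j) where
  smul m a :=
    if h : ∃ y : Π₀ j, Mf j, ∀ j, y j = (df j).smul (m j) a then h.choose else 0
  component := fun γ => ⨅ j : J, ((df j).component γ).comap (DFinsupp.evalAddMonoidHom j)

/-- A descending chain of graded submodules is tight if
`Γ'₀(M_i/M_{i+1}) ⊇ Γ'₀(M_{i+1}/M_{i+2})` for all `i`. -/
def TightDesc (ℳ : GModData Γ R M) (c : ℕ → AddSubgroup M) : Prop :=
  (∀ i, ℳ.IsGrSub (c i)) ∧ (∀ i, c (i + 1) ≤ c i) ∧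
  ∀ i, (ℳ.subquot (c (i + 2)) (c (i + 1))).partSupport ⊆
    (ℳ.subquot (c (i + 1)) (c i)).partSupport

/-- An ascending chain of graded submodules is tight if
`Γ'₀(M_{i+1}/M_i) ⊇ Γ'₀(M_{i+2}/M_{i+1})` for all `i`. -/
def TightAsc (ℳ : GModData Γ R M) (c : ℕ → AddSubgroup M) : Prop :=
  (∀ i, ℳ.IsGrSub (c i)) ∧ (∀ i, c i ≤ c (i + 1)) ∧
  ∀ i, (ℳ.subquot (c (i + 1)) (c (i + 2))).partSupport ⊆
    (ℳ.subquot (c i) (c (i + 1))).partSupport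

/-- `M` is strongly `Γ₀`-artinian: every tight descending chain of graded
submodules stabilizes. -/
def StronglyG0Artinian (ℳ : GModData Γ R M) : Prop :=
  ∀ c : ℕ → AddSubgroup M, ℳ.TightDesc c → ∃ n, ∀ m, n ≤ m → c m = c n

/-- `M` is strongly `Γ₀`-noetherian: every tight ascending chain of graded
submodules stabilizes. -/
def StronglyG0Noetherian (ℳ : GModData Γ R M) : Prop :=
  ∀ c : ℕ → AddSubgroup M, ℳ.TightAsc c → ∃ n, ∀ m, n ≤ m → c m = c n

end GModData

/-- `E` is a gr-injective graded right `R`-module: for all graded right `R`-modules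
`M`, `N`, every injective gr-homomorphism `g : N → M` and every gr-homomorphism
`h : N → E`, there is a gr-homomorphism `h' : M → E` with `h' ∘ g = h`. -/
def GrInjective {R : Type u} [AddCommGroup R] (𝒜 : GRingData Γ R) {E : Type u}
    [AddCommGroup E] (ℰ : GModData Γ R E) : Prop :=
  ∀ (M N : Type u) [AddCommGroup M] [AddCommGroup N]
    (ℳ : GModData Γ R M) (𝒩 : GModData Γ R N),
    ℳ.IsGraded 𝒜 → 𝒩.IsGraded 𝒜 →
    ∀ g : N → M, GModData.IsGrHom 𝒩 ℳ g → Function.Injective g →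
    ∀ h : N → E, GModData.IsGrHom 𝒩 ℰ h →
    ∃ h' : M → E, GModData.IsGrHom ℳ ℰ h' ∧ ∀ y : N, h' (g y) = h y

/-- A bundled `Γ`-graded right module over the graded ring `𝒜`. -/
structure GrModule (Γ : Type u) [Groupoid.{u} Γ] {R : Type u} [AddCommGroup R]
    (𝒜 : GRingData Γ R) : Type (u + 1) where
  carrier : Type u
  [addCommGroup : AddCommGroup carrier]
  data : GModData Γ R carrier
  graded : data.IsGraded 𝒜

attribute [instance] GrModule.addCommGroup

namespace GRingData

variable {R : Type u} [AddCommGroup R]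

/-- `R` is right `Γ₀`-noetherian. -/
def RightG0Noetherian (𝒜 : GRingData Γ R) : Prop := 𝒜.toMod.G0Noetherian

/-- `R` is right `Γ₀`-artinian. -/
def RightG0Artinian (𝒜 : GRingData Γ R) : Prop := 𝒜.toMod.G0Artinian

/-- The principal right ideal `aR`. -/
def principal (𝒜 : GRingData Γ R) (a : R) : AddSubgroup R :=
  AddSubgroup.closure {x : R | ∃ b : R, x = 𝒜.mul a b}

/-- A gr-principal graded right ideal: one of the form `aR` with `a` homogeneous. -/
def IsGrPrincipal (𝒜 : GRingData Γ R) (N : AddSubgroup R) : Prop :=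
  ∃ a : R, 𝒜.toMod.IsHomogeneous a ∧ N = 𝒜.principal a

/-- `N` is a graded left ideal of `R`, i.e. a graded submodule of `_R R`. -/
def IsGrLeftIdeal (𝒜 : GRingData Γ R) (N : AddSubgroup R) : Prop :=
  (∀ m ∈ N, ∀ a : R, 𝒜.mul a m ∈ N) ∧
  ∀ n ∈ N, n ∈ AddSubgroup.closure {x : R | x ∈ N ∧ 𝒜.toMod.IsHomogeneous x}

/-- `N` is a gr-maximal graded left ideal of `R`. -/
def IsGrMaxLeftIdeal (𝒜 : GRingData Γ R) (N : AddSubgroup R) : Prop :=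
  𝒜.IsGrLeftIdeal N ∧ N ≠ ⊤ ∧
    ∀ L : AddSubgroup R, 𝒜.IsGrLeftIdeal L → N ≤ L → L = N ∨ L = ⊤

/-- The graded Jacobson radical of `R` as a left module over itself:
the intersection of all gr-maximal graded left ideals. -/
def lRad (𝒜 : GRingData Γ R) : AddSubgroup R := sInf {N | 𝒜.IsGrMaxLeftIdeal N}

/-- `N` is a graded (two-sided) ideal of `R`. -/
def IsGrIdeal (𝒜 : GRingData Γ R) (N : AddSubgroup R) : Prop :=
  𝒜.toMod.IsGrSub N ∧ ∀ m ∈ N, ∀ a : R, 𝒜.mul a m ∈ N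

/-- `N ⊆ R_e` is a left ideal of the unital ring `R_e`. -/
def IsLeftIdealIn (𝒜 : GRingData Γ R) (e : Γ) (N : Set R) : Prop :=
  N ⊆ (𝒜.component (𝟙 e) : Set R) ∧ (0 : R) ∈ N ∧
  (∀ a ∈ N, ∀ b ∈ N, a - b ∈ N) ∧
  ∀ r ∈ 𝒜.component (𝟙 e), ∀ a ∈ N, 𝒜.mul r a ∈ N

/-- `N` is a maximal left ideal of the unital ring `R_e`. -/
def IsMaxLeftIdealIn (𝒜 : GRingData Γ R) (e : Γ) (N : Set R) : Prop :=
  𝒜.IsLeftIdealIn e N ∧ N ≠ (𝒜.component (𝟙 e) : Set R) ∧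
  ∀ L : Set R, 𝒜.IsLeftIdealIn e L → N ⊆ L →
    L = N ∨ L = (𝒜.component (𝟙 e) : Set R)

/-- The Jacobson radical `rad(R_e)` of the unital ring `R_e`, as a subset of `R`:
the intersection of all maximal left ideals of `R_e`. -/
def radIn (𝒜 : GRingData Γ R) (e : Γ) : Set R :=
  (𝒜.component (𝟙 e) : Set R) ∩ ⋂₀ {N : Set R | 𝒜.IsMaxLeftIdealIn e N}

/-- The quotient graded ring `R/I` of `R` by a graded ideal `I`. -/
noncomputable def quotRing (𝒜 : GRingData Γ R) (I : AddSubgroup R) :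
    GRingData Γ (R ⧸ I) where
  mul x y := QuotientAddGroup.mk (𝒜.mul (Quotient.out x) (Quotient.out y))
  component := fun γ => (𝒜.component γ).map (QuotientAddGroup.mk' I)
  one e := QuotientAddGroup.mk (𝒜.one e)

/-- `R` is a gr-semisimple ring. -/
def GrSemisimpleRing (𝒜 : GRingData Γ R) : Prop := 𝒜.toMod.GrSemisimple

/-- `R` is gr-semilocal: the `Γ`-graded ring `R/rad^gr(R)` is gr-semisimple. -/
noncomputable def GrSemilocal (𝒜 : GRingData Γ R) : Prop :=
  ((𝒜.quotRing 𝒜.toMod.grRad).GrSemisimpleRing)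

end GRingData

section Infra

open GModData

variable {Γ : Type u} [Groupoid.{u} Γ] {R : Type u} [AddCommGroup R] {M : Type u}
  [AddCommGroup M] {𝒜 : GRingData Γ R} {ℳ : GModData Γ R M}

open scoped Classical in
/-- The projection onto the `γ`-component. -/
noncomputable def gproj (hℳ : ℳ.IsGraded 𝒜) (γ : GrIdx Γ) (x : M) : M :=
  if γ ∈ (hℳ.decompose x).choose then (hℳ.decompose x).choose_spec.choose γ else 0

variable (hℳ : ℳ.IsGraded 𝒜)

open scoped Classical in
theorem gproj_eq {s : Finset (GrIdx Γ)} {cf : GrIdx Γ → M} {x : M}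
    (h1 : ∀ γ ∈ s, cf γ ∈ ℳ.component γ.2.2) (h2 : x = ∑ γ ∈ s, cf γ) (γ : GrIdx Γ) :
    gproj hℳ γ x = if γ ∈ s then cf γ else 0 := by
  obtain ⟨h1', h2'⟩ := (hℳ.decompose x).choose_spec.choose_spec
  set s₀ := (hℳ.decompose x).choose with hs₀
  set cf₀ := (hℳ.decompose x).choose_spec.choose with hcf₀
  have key : ∀ δ ∈ s ∪ s₀,
      ((if δ ∈ s then cf δ else 0) - (if δ ∈ s₀ then cf₀ δ else 0)) = 0 := by
    apply hℳ.independent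
    · intro δ _
      apply sub_mem <;> split <;> first | exact h1 _ ‹_› | exact h1' _ ‹_› | exact zero_mem _
    · rw [Finset.sum_sub_distrib, Finset.sum_ite_mem, Finset.sum_ite_mem,
        Finset.union_inter_cancel_left, Finset.union_inter_cancel_right, ← h2, ← h2', sub_self]
  have key' : ∀ δ, (if δ ∈ s then cf δ else 0) = (if δ ∈ s₀ then cf₀ δ else 0) := by
    intro δ
    by_cases hδ : δ ∈ s ∪ s₀
    · exact sub_eq_zero.mp (key δ hδ)
    · rw [Finset.mem_union] at hδ
      push_neg at hδ
      rw [if_neg hδ.1, if_neg hδ.2]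
  rw [gproj, ← key' γ]

theorem gproj_mem (γ : GrIdx Γ) (x : M) : gproj hℳ γ x ∈ ℳ.component γ.2.2 := by
  classical
  rw [gproj]
  split
  · exact (hℳ.decompose x).choose_spec.choose_spec.1 _ ‹_›
  · exact zero_mem _

theorem exists_sum_gproj (x : M) :
    ∃ s : Finset (GrIdx Γ), (∀ γ, γ ∉ s → gproj hℳ γ x = 0) ∧ x = ∑ γ ∈ s, gproj hℳ γ x := by
  classical
  obtain ⟨h1, h2⟩ := (hℳ.decompose x).choose_spec.choose_spec
  refine ⟨(hℳ.decompose x).choose, fun γ hγ => ?_, ?_⟩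
  · rw [gproj_eq hℳ h1 h2, if_neg hγ]
  · conv_lhs => rw [h2]
    apply Finset.sum_congr rfl
    intro γ hγ
    rw [gproj_eq hℳ h1 h2, if_pos hγ]

theorem gproj_zero (γ : GrIdx Γ) : gproj hℳ γ (0 : M) = 0 := by
  classical
  rw [gproj_eq hℳ (s := ∅) (cf := fun _ => 0) (by simp) (by simp)]
  simp

theorem gproj_add (γ : GrIdx Γ) (x y : M) :
    gproj hℳ γ (x + y) = gproj hℳ γ x + gproj hℳ γ y := by
  classical
  obtain ⟨sx, hx0, hx⟩ := exists_sum_gproj hℳ x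
  obtain ⟨sy, hy0, hy⟩ := exists_sum_gproj hℳ y
  have h1 : ∀ δ ∈ sx ∪ sy, gproj hℳ δ x + gproj hℳ δ y ∈ ℳ.component δ.2.2 :=
    fun δ _ => add_mem (gproj_mem hℳ δ x) (gproj_mem hℳ δ y)
  have h2 : x + y = ∑ δ ∈ sx ∪ sy, (gproj hℳ δ x + gproj hℳ δ y) := by
    rw [Finset.sum_add_distrib, ← Finset.sum_subset Finset.subset_union_left
        (fun δ _ h => hx0 δ h), ← Finset.sum_subset Finset.subset_union_right
        (fun δ _ h => hy0 δ h), ← hx, ← hy]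
  rw [gproj_eq hℳ h1 h2]
  split
  · rfl
  · rename_i h
    rw [Finset.mem_union] at h
    push_neg at h
    rw [hx0 _ h.1, hy0 _ h.2, add_zero]

/-- `gproj` as an `AddMonoidHom`. -/
noncomputable def gprojHom (γ : GrIdx Γ) : M →+ M :=
  AddMonoidHom.mk' (gproj hℳ γ) (gproj_add hℳ γ)

theorem gproj_neg (γ : GrIdx Γ) (x : M) : gproj hℳ γ (-x) = - gproj hℳ γ x :=
  map_neg (gprojHom hℳ γ) x

open scoped Classical in
theorem gproj_of_mem {e f : Γ} {σ : e ⟶ f} {x : M} (hx : x ∈ ℳ.component σ)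
    (γ : GrIdx Γ) : gproj hℳ γ x = if γ = ⟨e, f, σ⟩ then x else 0 := by
  classical
  have h1 : ∀ δ ∈ ({(⟨e, f, σ⟩ : GrIdx Γ)} : Finset (GrIdx Γ)), x ∈ ℳ.component δ.2.2 := by
    intro δ hδ
    rw [Finset.mem_singleton] at hδ
    subst hδ
    exact hx
  have h2 : x = ∑ δ ∈ ({(⟨e, f, σ⟩ : GrIdx Γ)} : Finset (GrIdx Γ)), x := by simp
  rw [gproj_eq hℳ (cf := fun _ => x) h1 h2]
  simp

theorem gproj_sum {ι : Type*} (γ : GrIdx Γ) (s : Finset ι) (f : ι → M) :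
    gproj hℳ γ (∑ i ∈ s, f i) = ∑ i ∈ s, gproj hℳ γ (f i) :=
  map_sum (gprojHom hℳ γ) f s

end Infra
section Infra2

open GModData

variable {Γ : Type u} [Groupoid.{u} Γ] {R : Type u} [AddCommGroup R] {M : Type u}
  [AddCommGroup M] {𝒜 : GRingData Γ R} {ℳ : GModData Γ R M} (hℳ : ℳ.IsGraded 𝒜)

include hℳ

theorem smul_zero' (m : M) : ℳ.smul m 0 = 0 := by
  have := hℳ.smul_add m 0 0
  rw [add_zero] at this
  exact (left_eq_add.mp this)

theorem zero_smul' (a : R) : ℳ.smul 0 a = 0 := by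
  have := hℳ.add_smul 0 0 a
  rw [add_zero] at this
  exact (left_eq_add.mp this)

theorem neg_smul' (m : M) (a : R) : ℳ.smul (-m) a = -(ℳ.smul m a) := by
  have := hℳ.add_smul m (-m) a
  rw [add_neg_cancel, zero_smul' hℳ] at this
  exact (neg_eq_of_add_eq_zero_right this.symm).symm

theorem gproj_mem_of_grSub {N : AddSubgroup M} (hN : ℳ.IsGrSub N) {n : M} (hn : n ∈ N)
    (γ : GrIdx Γ) : gproj hℳ γ n ∈ N := by
  refine AddSubgroup.closure_induction (p := fun x _ => gproj hℳ γ x ∈ N)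
    ?_ ?_ ?_ ?_ (hN.2 n hn)
  · rintro x ⟨hxN, e, f, σ, hσ⟩
    rw [gproj_of_mem hℳ hσ]
    split
    · exact hxN
    · exact zero_mem N
  · show gproj hℳ γ 0 ∈ N
    rw [gproj_zero hℳ]; exact zero_mem N
  · intro x y _ _ hx hy
    show gproj hℳ γ (x + y) ∈ N
    rw [gproj_add hℳ]; exact add_mem hx hy
  · intro x _ hx
    show gproj hℳ γ (-x) ∈ N
    rw [gproj_neg hℳ]; exact neg_mem hx

theorem isGrSub_iff {N : AddSubgroup M} :
    ℳ.IsGrSub N ↔ (∀ m ∈ N, ∀ a : R, ℳ.smul m a ∈ N) ∧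
      ∀ n ∈ N, ∀ γ : GrIdx Γ, gproj hℳ γ n ∈ N := by
  constructor
  · exact fun hN => ⟨hN.1, fun n hn γ => gproj_mem_of_grSub hℳ hN hn γ⟩
  · rintro ⟨hs, hp⟩
    refine ⟨hs, fun n hn => ?_⟩
    obtain ⟨s, -, hsum⟩ := exists_sum_gproj hℳ n
    rw [hsum]
    refine sum_mem fun γ _ => AddSubgroup.subset_closure ?_
    exact ⟨hp n hn γ, γ.1, γ.2.1, γ.2.2, gproj_mem hℳ γ n⟩

theorem grSub_bot : ℳ.IsGrSub (⊥ : AddSubgroup M) := by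
  rw [isGrSub_iff hℳ]
  constructor
  · intro m hm a
    rw [AddSubgroup.mem_bot] at hm ⊢
    rw [hm, zero_smul' hℳ]
  · intro n hn γ
    rw [AddSubgroup.mem_bot] at hn ⊢
    rw [hn, gproj_zero hℳ]

theorem grSub_top : ℳ.IsGrSub (⊤ : AddSubgroup M) := by
  rw [isGrSub_iff hℳ]; exact ⟨fun _ _ _ => trivial, fun _ _ _ => trivial⟩

theorem grSub_inf {N P : AddSubgroup M} (hN : ℳ.IsGrSub N) (hP : ℳ.IsGrSub P) :
    ℳ.IsGrSub (N ⊓ P) := by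
  rw [isGrSub_iff hℳ] at *
  exact ⟨fun m hm a => ⟨hN.1 m hm.1 a, hP.1 m hm.2 a⟩,
    fun n hn γ => ⟨hN.2 n hn.1 γ, hP.2 n hn.2 γ⟩⟩

theorem grSub_sInf {S : Set (AddSubgroup M)} (hS : ∀ N ∈ S, ℳ.IsGrSub N) :
    ℳ.IsGrSub (sInf S) := by
  rw [isGrSub_iff hℳ]
  constructor
  · intro m hm a
    rw [AddSubgroup.mem_sInf] at hm ⊢
    exact fun p hp => ((isGrSub_iff hℳ).mp (hS p hp)).1 m (hm p hp) a
  · intro n hn γ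
    rw [AddSubgroup.mem_sInf] at hn ⊢
    exact fun p hp => ((isGrSub_iff hℳ).mp (hS p hp)).2 n (hn p hp) γ

theorem grSub_sup {N P : AddSubgroup M} (hN : ℳ.IsGrSub N) (hP : ℳ.IsGrSub P) :
    ℳ.IsGrSub (N ⊔ P) := by
  rw [isGrSub_iff hℳ] at *
  constructor
  · intro m hm a
    obtain ⟨y, hy, z, hz, rfl⟩ := AddSubgroup.mem_sup.mp hm
    rw [hℳ.add_smul]
    exact AddSubgroup.mem_sup.mpr ⟨_, hN.1 y hy a, _, hP.1 z hz a, rfl⟩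
  · intro n hn γ
    obtain ⟨y, hy, z, hz, rfl⟩ := AddSubgroup.mem_sup.mp hn
    rw [gproj_add hℳ]
    exact AddSubgroup.mem_sup.mpr ⟨_, hN.2 y hy γ, _, hP.2 z hz γ, rfl⟩

theorem grSub_finsetSup {t : Finset (AddSubgroup M)} (ht : ∀ N ∈ t, ℳ.IsGrSub N) :
    ℳ.IsGrSub (t.sup id) := by
  classical
  induction t using Finset.induction_on with
  | empty => simpa using grSub_bot hℳ
  | insert _ _ hx ih =>
    rw [Finset.sup_insert]
    exact grSub_sup hℳ (ht _ (Finset.mem_insert_self _ _))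
      (ih fun N hN => ht N (Finset.mem_insert_of_mem hN))

theorem grSub_finsetInf {t : Finset (AddSubgroup M)} (ht : ∀ N ∈ t, ℳ.IsGrSub N) :
    ℳ.IsGrSub (t.inf id) := by
  rw [Finset.inf_id_eq_sInf]
  exact grSub_sInf hℳ ht

omit hℳ in
theorem mem_sSup_iff_finsetSup {S : Set (AddSubgroup M)} {x : M} :
    x ∈ sSup S ↔ ∃ t : Finset (AddSubgroup M), ↑t ⊆ S ∧ x ∈ t.sup id := by
  classical
  constructor
  · intro hx
    let K : AddSubgroup M :=
      { carrier := {x | ∃ t : Finset (AddSubgroup M), ↑t ⊆ S ∧ x ∈ t.sup id}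
        zero_mem' := ⟨∅, by simp⟩
        add_mem' := by
          rintro a b ⟨t1, ht1, ha⟩ ⟨t2, ht2, hb⟩
          have h1 : t1.sup id ≤ (t1 ∪ t2).sup id := Finset.sup_mono Finset.subset_union_left
          have h2 : t2.sup id ≤ (t1 ∪ t2).sup id := Finset.sup_mono Finset.subset_union_right
          exact ⟨t1 ∪ t2, by simp [Set.union_subset_iff, ht1, ht2], add_mem (h1 ha) (h2 hb)⟩
        neg_mem' := by
          rintro a ⟨t1, ht1, ha⟩
          exact ⟨t1, ht1, neg_mem ha⟩ }
    have hK : sSup S ≤ K := by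
      apply sSup_le
      intro N hN
      intro y hy
      exact ⟨{N}, by simpa using hN, by simpa using hy⟩
    exact hK hx
  · rintro ⟨t, htS, hx⟩
    have : t.sup id ≤ sSup S := by
      apply Finset.sup_le
      intro N hN
      exact le_sSup (htS hN)
    exact this hx

theorem grSub_sSup {S : Set (AddSubgroup M)} (hS : ∀ N ∈ S, ℳ.IsGrSub N) :
    ℳ.IsGrSub (sSup S) := by
  rw [isGrSub_iff hℳ]
  constructor
  · intro m hm a
    obtain ⟨t, htS, hm⟩ := mem_sSup_iff_finsetSup.mp hm
    have := ((isGrSub_iff hℳ).mp (grSub_finsetSup hℳ fun N hN => hS N (htS hN))).1 m hm a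
    exact mem_sSup_iff_finsetSup.mpr ⟨t, htS, this⟩
  · intro n hn γ
    obtain ⟨t, htS, hn⟩ := mem_sSup_iff_finsetSup.mp hn
    have := ((isGrSub_iff hℳ).mp (grSub_finsetSup hℳ fun N hN => hS N (htS hN))).2 n hn γ
    exact mem_sSup_iff_finsetSup.mpr ⟨t, htS, this⟩

theorem grSub_iSup {ι : Sort*} {f : ι → AddSubgroup M} (hf : ∀ i, ℳ.IsGrSub (f i)) :
    ℳ.IsGrSub (⨆ i, f i) := by
  have h : (⨆ i, f i) = sSup (Set.range f) := by rw [sSup_range]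
  rw [h]
  exact grSub_sSup hℳ (by rintro N ⟨i, rfl⟩; exact hf i)

omit hℳ in
/-- modular law for subgroups of an abelian group, as an equality. -/
theorem modular_eq {z d c : AddSubgroup M} (h : z ≤ d) : d ⊓ (z ⊔ c) = z ⊔ (d ⊓ c) := by
  apply le_antisymm
  · rintro x ⟨hxd, hx⟩
    obtain ⟨y, hy, w, hw, rfl⟩ := AddSubgroup.mem_sup.mp hx
    have hwd : w ∈ d := by
      have : y + w - y ∈ d := sub_mem hxd (h hy)
      simpa using this
    exact AddSubgroup.mem_sup.mpr ⟨y, hy, w, ⟨hwd, hw⟩, rfl⟩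
  · apply sup_le
    · exact le_inf h le_sup_left
    · exact le_inf inf_le_left (le_trans inf_le_right le_sup_right)

omit hℳ in
theorem eq_of_inf_sup {a b y : AddSubgroup M} (hab : a ≤ b) (hinf : a ⊓ y = b ⊓ y)
    (hsup : a ⊔ y = b ⊔ y) : a = b := by
  apply le_antisymm hab
  intro x hx
  have : x ∈ a ⊔ y := hsup ▸ AddSubgroup.mem_sup.mpr ⟨x, hx, 0, zero_mem _, add_zero x⟩
  obtain ⟨u, hu, v, hv, rfl⟩ := AddSubgroup.mem_sup.mp this
  have hvb : v ∈ b := by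
    have : u + v - u ∈ b := sub_mem hx (hab hu)
    simpa using this
  have : v ∈ a ⊓ y := hinf ▸ ⟨hvb, hv⟩
  exact add_mem hu this.1

end Infra2
section Infra3
set_option linter.unusedSectionVars false
set_option linter.unusedVariables false

open GModData

variable {Γ : Type u} [Groupoid.{u} Γ] {R : Type u} [AddCommGroup R] {M : Type u}
  [AddCommGroup M] {𝒜 : GRingData Γ R} {ℳ : GModData Γ R M} (hℳ : ℳ.IsGraded 𝒜)

/-- No infinite strictly increasing chain of graded submodules within `[x, y]`. -/
def NoUp (ℳ : GModData Γ R M) (x y : AddSubgroup M) : Prop :=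
  ¬ ∃ c : ℕ → AddSubgroup M, (∀ n, ℳ.IsGrSub (c n)) ∧ (∀ n, x ≤ c n ∧ c n ≤ y) ∧
      ∀ n, c n < c (n + 1)

/-- No infinite strictly decreasing chain of graded submodules within `[x, y]`. -/
def NoDown (ℳ : GModData Γ R M) (x y : AddSubgroup M) : Prop :=
  ¬ ∃ c : ℕ → AddSubgroup M, (∀ n, ℳ.IsGrSub (c n)) ∧ (∀ n, x ≤ c n ∧ c n ≤ y) ∧
      ∀ n, c (n + 1) < c n

/-- A graded-covering relation: the graded interval `[x,y]` has at most two elements. -/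
def GrGap (ℳ : GModData Γ R M) (x y : AddSubgroup M) : Prop :=
  x ≤ y ∧ ∀ z : AddSubgroup M, ℳ.IsGrSub z → x ≤ z → z ≤ y → z = x ∨ z = y

theorem noUp_of_gap {x y : AddSubgroup M} (h : GrGap ℳ x y) : NoUp ℳ x y := by
  rintro ⟨c, hgr, hb, hs⟩
  have key : ∀ n, c n = x ∧ c (n + 1) = y := by
    intro n
    have h0 := h.2 (c n) (hgr n) (hb n).1 (hb n).2
    have h1 := h.2 (c (n + 1)) (hgr (n + 1)) (hb (n + 1)).1 (hb (n + 1)).2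
    rcases h0 with h0 | h0 <;> rcases h1 with h1 | h1
    · have hh := hs n; rw [h0, h1] at hh; exact absurd hh (lt_irrefl x)
    · exact ⟨h0, h1⟩
    · have hh := hs n; rw [h0, h1] at hh; exact absurd (lt_of_lt_of_le hh h.1) (lt_irrefl y)
    · have hh := hs n; rw [h0, h1] at hh; exact absurd hh (lt_irrefl y)
  have e1 : c 1 = y := (key 0).2
  have e2 : c 1 = x := (key 1).1
  have hlt := hs 0
  rw [(key 0).1, e1] at hlt
  rw [e2] at e1
  exact lt_irrefl y (e1 ▸ hlt)

theorem noDown_of_gap {x y : AddSubgroup M} (h : GrGap ℳ x y) : NoDown ℳ x y := by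
  rintro ⟨c, hgr, hb, hs⟩
  have key : ∀ n, c n = y ∧ c (n + 1) = x := by
    intro n
    have h0 := h.2 (c n) (hgr n) (hb n).1 (hb n).2
    have h1 := h.2 (c (n + 1)) (hgr (n + 1)) (hb (n + 1)).1 (hb (n + 1)).2
    rcases h0 with h0 | h0 <;> rcases h1 with h1 | h1
    · have hh := hs n; rw [h0, h1] at hh; exact absurd hh (lt_irrefl x)
    · have hh := hs n; rw [h0, h1] at hh; exact absurd (lt_of_le_of_lt h.1 hh) (lt_irrefl x)
    · exact ⟨h0, h1⟩
    · have hh := hs n; rw [h0, h1] at hh; exact absurd hh (lt_irrefl y)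
  have e1 : c 1 = x := (key 0).2
  have e2 : c 1 = y := (key 1).1
  have hlt := hs 0
  rw [(key 0).1, e1] at hlt
  rw [e2] at e1
  exact lt_irrefl y (e1 ▸ hlt)

theorem gap_self (x : AddSubgroup M) : GrGap ℳ x x :=
  ⟨le_refl x, fun z _ h1 h2 => Or.inl (le_antisymm h2 h1)⟩

theorem stabilize_up {x y : AddSubgroup M} (h : NoUp ℳ x y) (d : ℕ → AddSubgroup M)
    (hgr : ∀ n, ℳ.IsGrSub (d n)) (hb : ∀ n, x ≤ d n ∧ d n ≤ y)
    (hmono : ∀ n m, n ≤ m → d n ≤ d m) :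
    ∃ N, ∀ m, N ≤ m → d m = d N := by
  by_contra hc
  push_neg at hc
  apply h
  have hc' : ∀ N, ∃ m, N ≤ m ∧ d N < d m := by
    intro N
    obtain ⟨m, hm1, hm2⟩ := hc N
    exact ⟨m, hm1, lt_of_le_of_ne (hmono N m hm1) (Ne.symm hm2)⟩
  let g : ℕ → ℕ := fun n => Nat.rec 0 (fun _ k => (hc' k).choose) n
  refine ⟨fun n => d (g n), fun n => hgr _, fun n => hb _, fun n => ?_⟩
  exact (hc' (g n)).choose_spec.2

theorem stabilize_down {x y : AddSubgroup M} (h : NoDown ℳ x y) (d : ℕ → AddSubgroup M)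
    (hgr : ∀ n, ℳ.IsGrSub (d n)) (hb : ∀ n, x ≤ d n ∧ d n ≤ y)
    (hmono : ∀ n m, n ≤ m → d m ≤ d n) :
    ∃ N, ∀ m, N ≤ m → d m = d N := by
  by_contra hc
  push_neg at hc
  apply h
  have hc' : ∀ N, ∃ m, N ≤ m ∧ d m < d N := by
    intro N
    obtain ⟨m, hm1, hm2⟩ := hc N
    exact ⟨m, hm1, lt_of_le_of_ne (hmono N m hm1) hm2⟩
  let g : ℕ → ℕ := fun n => Nat.rec 0 (fun _ k => (hc' k).choose) n
  refine ⟨fun n => d (g n), fun n => hgr _, fun n => hb _, fun n => ?_⟩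
  exact (hc' (g n)).choose_spec.2

include hℳ

theorem glue_up {x y z : AddSubgroup M} (hxy : x ≤ y) (hyz : y ≤ z) (hgry : ℳ.IsGrSub y)
    (h1 : NoUp ℳ x y) (h2 : NoUp ℳ y z) : NoUp ℳ x z := by
  rintro ⟨c, hgr, hb, hs⟩
  have hmono : ∀ n m, n ≤ m → c n ≤ c m :=
    fun n m h => monotone_nat_of_le_succ (fun k => le_of_lt (hs k)) h
  obtain ⟨N1, hN1⟩ := stabilize_up h1 (fun n => c n ⊓ y)
    (fun n => grSub_inf hℳ (hgr n) hgry) (fun n => ⟨le_inf (hb n).1 hxy, inf_le_right⟩)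
    (fun n m h => inf_le_inf_right y (hmono n m h))
  obtain ⟨N2, hN2⟩ := stabilize_up h2 (fun n => c n ⊔ y)
    (fun n => grSub_sup hℳ (hgr n) hgry) (fun n => ⟨le_sup_right, sup_le (hb n).2 hyz⟩)
    (fun n m h => sup_le_sup_right (hmono n m h) y)
  set N := max N1 N2 with hN
  have e1 : c N ⊓ y = c (N + 1) ⊓ y := by
    have a1 := hN1 N (le_max_left _ _)
    have a2 := hN1 (N + 1) (le_trans (le_max_left _ _) (Nat.le_succ _))
    rw [a1, a2]
  have e2 : c N ⊔ y = c (N + 1) ⊔ y := by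
    have a1 := hN2 N (le_max_right _ _)
    have a2 := hN2 (N + 1) (le_trans (le_max_right _ _) (Nat.le_succ _))
    rw [a1, a2]
  exact absurd (eq_of_inf_sup (le_of_lt (hs N)) e1 e2) (ne_of_lt (hs N))

theorem glue_down {x y z : AddSubgroup M} (hxy : x ≤ y) (hyz : y ≤ z) (hgry : ℳ.IsGrSub y)
    (h1 : NoDown ℳ x y) (h2 : NoDown ℳ y z) : NoDown ℳ x z := by
  rintro ⟨c, hgr, hb, hs⟩
  have hmono : ∀ n m, n ≤ m → c m ≤ c n :=
    fun n m h => antitone_nat_of_succ_le (fun k => le_of_lt (hs k)) h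
  obtain ⟨N1, hN1⟩ := stabilize_down h1 (fun n => c n ⊓ y)
    (fun n => grSub_inf hℳ (hgr n) hgry) (fun n => ⟨le_inf (hb n).1 hxy, inf_le_right⟩)
    (fun n m h => inf_le_inf_right y (hmono n m h))
  obtain ⟨N2, hN2⟩ := stabilize_down h2 (fun n => c n ⊔ y)
    (fun n => grSub_sup hℳ (hgr n) hgry) (fun n => ⟨le_sup_right, sup_le (hb n).2 hyz⟩)
    (fun n m h => sup_le_sup_right (hmono n m h) y)
  set N := max N1 N2 with hN
  have e1 : c (N + 1) ⊓ y = c N ⊓ y := by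
    have a1 := hN1 N (le_max_left _ _)
    have a2 := hN1 (N + 1) (le_trans (le_max_left _ _) (Nat.le_succ _))
    rw [a1, a2]
  have e2 : c (N + 1) ⊔ y = c N ⊔ y := by
    have a1 := hN2 N (le_max_right _ _)
    have a2 := hN2 (N + 1) (le_trans (le_max_right _ _) (Nat.le_succ _))
    rw [a1, a2]
  exact absurd (eq_of_inf_sup (le_of_lt (hs N)) e1 e2) (ne_of_lt (hs N))

theorem gap_coatom {c d : AddSubgroup M} (hc : ℳ.IsGrMaximalSub c) (hd : ℳ.IsGrSub d) :
    GrGap ℳ (d ⊓ c) d := by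
  refine ⟨inf_le_left, fun z hz h1 h2 => ?_⟩
  rcases hc.2.2 (z ⊔ c) (grSub_sup hℳ hz hc.1) le_sup_right with h | h
  · left
    have hzc : z ≤ c := le_trans le_sup_left h.le
    exact le_antisymm (le_inf h2 hzc) h1
  · right
    have hm : d ⊓ (z ⊔ c) = z ⊔ (d ⊓ c) := modular_eq h2
    rw [h, inf_top_eq, sup_eq_left.mpr h1] at hm
    exact hm.symm

theorem gap_atom {a s : AddSubgroup M} (ha : ℳ.IsGrSimpleSub a) (hs : ℳ.IsGrSub s) :
    GrGap ℳ s (s ⊔ a) := by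
  refine ⟨le_sup_left, fun z hz h1 h2 => ?_⟩
  rcases ha.2.2 (z ⊓ a) (grSub_inf hℳ hz ha.1) inf_le_right with h | h
  · left
    have hm : z ⊓ (s ⊔ a) = s ⊔ (z ⊓ a) := modular_eq h1
    rw [h, sup_bot_eq, inf_eq_left.mpr h2] at hm
    exact hm
  · right
    have haz : a ≤ z := h ▸ inf_le_left
    exact le_antisymm h2 (sup_le h1 haz)

theorem noChain_finsetSup {t : Finset (AddSubgroup M)} (ht : ∀ N ∈ t, ℳ.IsGrSimpleSub N) :
    NoUp ℳ ⊥ (t.sup id) ∧ NoDown ℳ ⊥ (t.sup id) := by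
  classical
  induction t using Finset.induction_on with
  | empty =>
    simp only [Finset.sup_empty]
    exact ⟨noUp_of_gap (gap_self _), noDown_of_gap (gap_self _)⟩
  | @insert a t hat ih =>
    have hts : ∀ N ∈ t, ℳ.IsGrSimpleSub N := fun N hN => ht N (Finset.mem_insert_of_mem hN)
    have hsup : (insert a t).sup id = t.sup id ⊔ a := by
      rw [Finset.sup_insert]; exact sup_comm _ _
    have hgrt : ℳ.IsGrSub (t.sup id) := grSub_finsetSup hℳ (fun N hN => (hts N hN).1)
    have hgap := gap_atom hℳ (ht a (Finset.mem_insert_self _ _)) hgrt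
    rw [hsup]
    obtain ⟨ihu, ihd⟩ := ih hts
    exact ⟨glue_up hℳ bot_le le_sup_left hgrt ihu (noUp_of_gap hgap),
      glue_down hℳ bot_le le_sup_left hgrt ihd (noDown_of_gap hgap)⟩

theorem noChain_finsetInf {t : Finset (AddSubgroup M)} (ht : ∀ N ∈ t, ℳ.IsGrMaximalSub N) :
    NoUp ℳ (t.inf id) ⊤ ∧ NoDown ℳ (t.inf id) ⊤ := by
  classical
  induction t using Finset.induction_on with
  | empty =>
    simp only [Finset.inf_empty]
    exact ⟨noUp_of_gap (gap_self _), noDown_of_gap (gap_self _)⟩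
  | @insert a t hat ih =>
    have hts : ∀ N ∈ t, ℳ.IsGrMaximalSub N := fun N hN => ht N (Finset.mem_insert_of_mem hN)
    have hinf : (insert a t).inf id = t.inf id ⊓ a := by
      rw [Finset.inf_insert]; exact inf_comm _ _
    have hgrt : ℳ.IsGrSub (t.inf id) := grSub_finsetInf hℳ (fun N hN => (hts N hN).1)
    have hgap := gap_coatom hℳ (ht a (Finset.mem_insert_self _ _)) hgrt
    rw [hinf]
    obtain ⟨ihu, ihd⟩ := ih hts
    exact ⟨glue_up hℳ inf_le_left le_top hgrt (noUp_of_gap hgap) ihu,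
      glue_down hℳ inf_le_left le_top hgrt (noDown_of_gap hgap) ihd⟩

end Infra3
section Infra4
set_option linter.unusedSectionVars false
set_option linter.unusedVariables false

open GModData

variable {Γ : Type u} [Groupoid.{u} Γ] {R : Type u} [AddCommGroup R] {M : Type u}
  [AddCommGroup M] {𝒜 : GRingData Γ R} {ℳ : GModData Γ R M} (hℳ : ℳ.IsGraded 𝒜)

/-- The graded submodule generated by a homogeneous element. -/
def grGen (ℳ : GModData Γ R M) (m : M) : AddSubgroup M :=
  AddSubgroup.closure ({m} ∪ Set.range (ℳ.smul m))

theorem mem_grGen (m : M) : m ∈ grGen ℳ m :=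
  AddSubgroup.subset_closure (Or.inl rfl)

include hℳ

theorem smul_sum' {ι : Type*} (m : M) (s : Finset ι) (f : ι → R) :
    ℳ.smul m (∑ i ∈ s, f i) = ∑ i ∈ s, ℳ.smul m (f i) := by
  classical
  induction s using Finset.induction_on with
  | empty => simpa using smul_zero' hℳ m
  | @insert a s ha ih => rw [Finset.sum_insert ha, Finset.sum_insert ha, hℳ.smul_add, ih]

theorem grGen_smulClosed (m : M) : ∀ x ∈ grGen ℳ m, ∀ a : R, ℳ.smul x a ∈ grGen ℳ m := by
  intro x hx
  refine AddSubgroup.closure_induction (p := fun x _ => ∀ a : R, ℳ.smul x a ∈ grGen ℳ m)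
    ?_ ?_ ?_ ?_ hx
  · rintro x hx a
    rcases hx with hx | ⟨b, rfl⟩
    · rw [Set.mem_singleton_iff] at hx; subst hx
      exact AddSubgroup.subset_closure (Or.inr ⟨a, rfl⟩)
    · rw [← hℳ.smul_mul]
      exact AddSubgroup.subset_closure (Or.inr ⟨_, rfl⟩)
  · intro a; rw [zero_smul' hℳ]; exact zero_mem _
  · intro x y _ _ hx hy a; rw [hℳ.add_smul]; exact add_mem (hx a) (hy a)
  · intro x _ hx a; rw [neg_smul' hℳ]; exact neg_mem (hx a)

theorem grGen_graded (h𝒜 : 𝒜.IsObjectUnital) {e f : Γ} {σ : e ⟶ f} {m : M}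
    (hm : m ∈ ℳ.component σ) : ℳ.IsGrSub (grGen ℳ m) := by
  classical
  rw [isGrSub_iff hℳ]
  refine ⟨grGen_smulClosed hℳ m, ?_⟩
  intro n hn
  refine AddSubgroup.closure_induction
    (p := fun x _ => ∀ γ : GrIdx Γ, gproj hℳ γ x ∈ grGen ℳ m) ?_ ?_ ?_ ?_ hn
  · rintro x hx γ
    rcases hx with hx | ⟨a, rfl⟩
    · rw [Set.mem_singleton_iff] at hx
      rw [hx, gproj_of_mem hℳ hm]
      split
      · exact mem_grGen _
      · exact zero_mem _
    · -- x = ℳ.smul m a; decompose a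
      obtain ⟨s, cf, hcf, rfl⟩ := h𝒜.decompose a
      rw [smul_sum' hℳ, gproj_sum hℳ]
      refine sum_mem fun τ hτ => ?_
      obtain ⟨g, h', τm⟩ := τ
      rcases eq_or_ne h' e with rfl | hne
      · have hmem : ℳ.smul m (cf ⟨g, h', τm⟩) ∈ ℳ.component (τm ≫ σ) :=
          hℳ.smul_mem σ τm hm (hcf _ hτ)
        rw [gproj_of_mem hℳ hmem]
        split
        · exact AddSubgroup.subset_closure (Or.inr ⟨_, rfl⟩)
        · exact zero_mem _
      · rw [hℳ.smul_eq_zero σ τm hne hm (hcf _ hτ), gproj_zero hℳ]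
        exact zero_mem _
  · intro γ; rw [gproj_zero hℳ]; exact zero_mem _
  · intro x y _ _ hx hy γ; rw [gproj_add hℳ]; exact add_mem (hx γ) (hy γ)
  · intro x _ hx γ; rw [gproj_neg hℳ]; exact neg_mem (hx γ)

omit hℳ in
theorem grGen_le {m : M} {N : AddSubgroup M} (hmN : m ∈ N)
    (hN : ∀ x ∈ N, ∀ a : R, ℳ.smul x a ∈ N) : grGen ℳ m ≤ N := by
  rw [grGen, AddSubgroup.closure_le]
  rintro x (hx | ⟨a, rfl⟩)
  · rw [Set.mem_singleton_iff] at hx; subst hx; exact hmN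
  · exact hN m hmN a

omit hℳ in
theorem exists_ne_zero_of_ne_bot {N : AddSubgroup M} (hN : N ≠ ⊥) :
    ∃ x ∈ N, x ≠ 0 := by
  by_contra hc
  push_neg at hc
  exact hN (eq_bot_iff.mpr fun x hx => AddSubgroup.mem_bot.mpr (hc x hx))

theorem grSimple_exists_gen (h𝒜 : 𝒜.IsObjectUnital) {N : AddSubgroup M}
    (hN : ℳ.IsGrSimpleSub N) : ∃ m : M, m ∈ N ∧ grGen ℳ m = N := by
  obtain ⟨n, hnN, hn0⟩ := exists_ne_zero_of_ne_bot hN.2.1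
  obtain ⟨s, hout, hsum⟩ := exists_sum_gproj hℳ n
  have : ∃ γ ∈ s, gproj hℳ γ n ≠ 0 := by
    by_contra hc
    push_neg at hc
    exact hn0 (by rw [hsum]; exact Finset.sum_eq_zero hc)
  obtain ⟨γ, -, hγ⟩ := this
  set m := gproj hℳ γ n with hm
  have hmN : m ∈ N := gproj_mem_of_grSub hℳ hN.1 hnN γ
  have hmgr := grGen_graded hℳ h𝒜 (gproj_mem hℳ γ n)
  have hle : grGen ℳ m ≤ N := grGen_le hmN hN.1.1
  rcases hN.2.2 (grGen ℳ m) hmgr hle with h | h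
  · exact absurd (h ▸ mem_grGen m) (by rw [AddSubgroup.mem_bot]; exact hγ)
  · exact ⟨m, hmN, h⟩

omit hℳ in
theorem subset_rClosure (X : Set M) : X ⊆ ↑(ℳ.rClosure X) := by
  intro x hx
  rw [GModData.rClosure, SetLike.mem_coe, AddSubgroup.mem_sInf]
  exact fun N hN => hN.1 hx

omit hℳ in
theorem rClosure_smulClosed (X : Set M) :
    ∀ m ∈ ℳ.rClosure X, ∀ a : R, ℳ.smul m a ∈ ℳ.rClosure X := by
  intro m hm a
  rw [GModData.rClosure, AddSubgroup.mem_sInf] at hm ⊢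
  exact fun N hN => hN.2 m (hm N hN) a

omit hℳ in
theorem rClosure_le {X : Set M} {N : AddSubgroup M} (hXN : X ⊆ ↑N)
    (hN : ∀ x ∈ N, ∀ a : R, ℳ.smul x a ∈ N) : ℳ.rClosure X ≤ N :=
  sInf_le ⟨hXN, hN⟩

omit hℳ in
theorem grGen_le_rClosure {m : M} {X : Set M} (hm : m ∈ X) :
    grGen ℳ m ≤ ℳ.rClosure X :=
  grGen_le (subset_rClosure X hm) (rClosure_smulClosed X)

theorem fg_of_finjoin (h𝒜 : 𝒜.IsObjectUnital)
    (h : ∃ t : Finset (AddSubgroup M), (∀ N ∈ t, ℳ.IsGrSimpleSub N) ∧ t.sup id = ⊤) :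
    ℳ.FG := by
  classical
  obtain ⟨t, ht, hsup⟩ := h
  have key : ∀ P : AddSubgroup M, ∃ m : M, P ∈ t → grGen ℳ m = P := by
    intro P
    by_cases hP : P ∈ t
    · obtain ⟨m, -, hm⟩ := grSimple_exists_gen hℳ h𝒜 (ht P hP)
      exact ⟨m, fun _ => hm⟩
    · exact ⟨0, fun h => absurd h hP⟩
  choose g hg using key
  refine ⟨t.image g, ?_⟩
  rw [eq_top_iff, ← hsup]
  apply Finset.sup_le
  intro P hP
  have : grGen ℳ (g P) ≤ ℳ.rClosure ↑(t.image g) :=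
    grGen_le_rClosure (by exact_mod_cast Finset.mem_image_of_mem g hP)
  rw [hg P hP] at this
  exact this

end Infra4
section Infra5
set_option linter.unusedSectionVars false
set_option linter.unusedVariables false

open GModData

variable {Γ : Type u} [Groupoid.{u} Γ] {R : Type u} [AddCommGroup R] {M : Type u}
  [AddCommGroup M] {𝒜 : GRingData Γ R} {ℳ : GModData Γ R M} (hℳ : ℳ.IsGraded 𝒜)

include hℳ

theorem exists_finjoin_of_fg (hss : ℳ.GrSemisimple) (hfg : ℳ.FG) :
    ∃ t : Finset (AddSubgroup M), (∀ N ∈ t, ℳ.IsGrSimpleSub N) ∧ t.sup id = ⊤ := by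
  classical
  obtain ⟨s, hs⟩ := hfg
  have hx : ∀ x : M, ∃ t : Finset (AddSubgroup M),
      ↑t ⊆ {N : AddSubgroup M | ℳ.IsGrSimpleSub N} ∧ x ∈ t.sup id := by
    intro x
    apply mem_sSup_iff_finsetSup.mp
    rw [GModData.GrSemisimple] at hss
    rw [hss]
    trivial
  choose f hf1 hf2 using hx
  refine ⟨s.biUnion f, fun N hN => ?_, ?_⟩
  · obtain ⟨x, hxs, hN⟩ := Finset.mem_biUnion.mp hN
    exact hf1 x hN
  · rw [eq_top_iff, ← hs]
    have hgr : ∀ N ∈ s.biUnion f, ℳ.IsGrSub N := by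
      intro N hN
      obtain ⟨x, hxs, hN⟩ := Finset.mem_biUnion.mp hN
      exact (hf1 x hN).1
    apply rClosure_le
    · intro x hxs
      have hsub : f x ⊆ s.biUnion f :=
        Finset.subset_biUnion_of_mem f (by exact_mod_cast hxs)
      have h1 : (f x).sup id ≤ (s.biUnion f).sup id := Finset.sup_mono hsub
      exact h1 (hf2 x)
    · exact ((isGrSub_iff hℳ).mp (grSub_finsetSup hℳ hgr)).1

theorem exists_finjoin_of_noetherian (hss : ℳ.GrSemisimple) (hnoe : ℳ.GrNoetherian) :
    ∃ t : Finset (AddSubgroup M), (∀ N ∈ t, ℳ.IsGrSimpleSub N) ∧ t.sup id = ⊤ := by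
  classical
  by_contra hc
  push_neg at hc
  have step : ∀ t : Finset (AddSubgroup M), (∀ N ∈ t, ℳ.IsGrSimpleSub N) →
      ∃ N : AddSubgroup M, ℳ.IsGrSimpleSub N ∧ ¬ N ≤ t.sup id := by
    intro t ht
    by_contra h2
    push_neg at h2
    have : sSup {N : AddSubgroup M | ℳ.IsGrSimpleSub N} ≤ t.sup id :=
      sSup_le fun N hN => h2 N hN
    rw [hss] at this
    exact hc t ht (le_antisymm le_top this)
  let F : ℕ → {t : Finset (AddSubgroup M) // ∀ N ∈ t, ℳ.IsGrSimpleSub N} := fun n =>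
    Nat.rec ⟨∅, by simp⟩ (fun _ p =>
      ⟨insert (step p.1 p.2).choose p.1, by
        intro N hN
        rcases Finset.mem_insert.mp hN with rfl | h
        · exact (step p.1 p.2).choose_spec.1
        · exact p.2 N h⟩) n
  have hFsucc : ∀ n, (F (n + 1)).1 = insert (step (F n).1 (F n).2).choose (F n).1 :=
    fun n => rfl
  apply hnoe
  refine ⟨fun n => (F n).1.sup id,
    fun n => grSub_finsetSup hℳ (fun N hN => ((F n).2 N hN).1), fun n => ?_⟩
  show (F n).1.sup id < (F (n + 1)).1.sup id
  rw [hFsucc n]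
  apply lt_of_le_of_ne (Finset.sup_mono (Finset.subset_insert _ _))
  intro heq
  have hle : (step (F n).1 (F n).2).choose ≤
      (insert (step (F n).1 (F n).2).choose (F n).1).sup id :=
    Finset.le_sup (f := id) (Finset.mem_insert_self _ _)
  rw [← heq] at hle
  exact (step (F n).1 (F n).2).choose_spec.2 hle

theorem five_of_finjoin
    (h : ∃ t : Finset (AddSubgroup M), (∀ N ∈ t, ℳ.IsGrSimpleSub N) ∧ t.sup id = ⊤) :
    ∃ (k : ℕ) (N : Fin k → AddSubgroup M), (∀ i, ℳ.IsGrSimpleSub (N i)) ∧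
      (⨆ i, N i) = ⊤ ∧ ∀ i : Fin k, N i ⊓ (⨆ j, ⨆ (_ : j ≠ i), N j) = ⊥ := by
  classical
  obtain ⟨t₀, ht₀, hsup₀⟩ := h
  have hne : ((t₀.powerset).filter (fun t => t.sup id = ⊤)).Nonempty :=
    ⟨t₀, by simp [hsup₀]⟩
  obtain ⟨t, htmem, hmin⟩ := Finset.exists_min_image _ Finset.card hne
  rw [Finset.mem_filter, Finset.mem_powerset] at htmem
  obtain ⟨hts, htop⟩ := htmem
  have hsimple : ∀ P ∈ t, ℳ.IsGrSimpleSub P := fun P hP => ht₀ P (hts hP)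
  set e := t.equivFin with he
  set N : Fin t.card → AddSubgroup M := fun i => (e.symm i : AddSubgroup M) with hN
  have hNmem : ∀ i, N i ∈ t := fun i => (e.symm i).2
  have hNinj : Function.Injective N := by
    intro i j hij
    have : e.symm i = e.symm j := Subtype.ext hij
    exact e.symm.injective this
  have hNsimple : ∀ i, ℳ.IsGrSimpleSub (N i) := fun i => hsimple _ (hNmem i)
  have hiSup : (⨆ i, N i) = t.sup id := by
    apply le_antisymm
    · exact iSup_le fun i => Finset.le_sup (f := id) (hNmem i)
    · apply Finset.sup_le
      intro P hP
      have hPe : P = N (e ⟨P, hP⟩) := by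
        rw [hN]
        simp only [Equiv.symm_apply_apply]
      show id P ≤ ⨆ i, N i
      rw [id, hPe]
      exact le_iSup N (e ⟨P, hP⟩)
  refine ⟨t.card, N, hNsimple, by rw [hiSup]; exact htop, fun i => ?_⟩
  have key : (⨆ j, ⨆ (_ : j ≠ i), N j) ≤ (t.erase (N i)).sup id := by
    refine iSup_le fun j => iSup_le fun hj => ?_
    apply Finset.le_sup (f := id)
    rw [Finset.mem_erase]
    exact ⟨fun hh => hj (hNinj hh), hNmem j⟩
  rw [eq_bot_iff]
  refine le_trans (inf_le_inf_left _ key) ?_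
  have hz : ℳ.IsGrSub (N i ⊓ (t.erase (N i)).sup id) :=
    grSub_inf hℳ (hNsimple i).1
      (grSub_finsetSup hℳ (fun P hP => (hsimple P (Finset.mem_of_mem_erase hP)).1))
  rcases (hNsimple i).2.2 _ hz inf_le_left with h | h
  · exact h.le
  · exfalso
    have ha_le : N i ≤ (t.erase (N i)).sup id := by
      have hh : N i ⊓ (t.erase (N i)).sup id ≤ (t.erase (N i)).sup id := inf_le_right
      rw [h] at hh
      exact hh
    have herase : (t.erase (N i)).sup id = ⊤ := by
      rw [eq_top_iff, ← htop]
      apply Finset.sup_le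
      intro P hP
      by_cases hPa : P = N i
      · exact hPa ▸ ha_le
      · exact Finset.le_sup (f := id) (Finset.mem_erase.mpr ⟨hPa, hP⟩)
    have hmem' : t.erase (N i) ∈ (t₀.powerset).filter (fun t => t.sup id = ⊤) := by
      rw [Finset.mem_filter, Finset.mem_powerset]
      exact ⟨le_trans (Finset.erase_subset _ _) hts, herase⟩
    have h1 := hmin _ hmem'
    have h2 := Finset.card_erase_lt_of_mem (hNmem i)
    omega

theorem finGrCog_of_artinian (hart : ℳ.GrArtinian) : ℳ.FinGrCogenerated := by
  classical
  intro S hS hinf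
  by_contra hc
  push_neg at hc
  have step : ∀ t : Finset (AddSubgroup M), ↑t ⊆ S →
      ∃ P, P ∈ S ∧ t.inf id ⊓ P < t.inf id := by
    intro t htS
    obtain ⟨x, hxt, hx0⟩ := exists_ne_zero_of_ne_bot (hc t htS)
    have hxS : x ∉ sInf S := by
      rw [hinf]
      simpa using hx0
    rw [AddSubgroup.mem_sInf] at hxS
    push_neg at hxS
    obtain ⟨P, hPS, hxP⟩ := hxS
    refine ⟨P, hPS, lt_of_le_of_ne inf_le_left fun heq => hxP ?_⟩
    rw [← heq] at hxt
    exact hxt.2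
  let F : ℕ → {t : Finset (AddSubgroup M) // ↑t ⊆ S} := fun n =>
    Nat.rec ⟨∅, by simp⟩ (fun _ p =>
      ⟨insert (step p.1 p.2).choose p.1, by
        rw [Finset.coe_insert]
        exact Set.insert_subset (step p.1 p.2).choose_spec.1 p.2⟩) n
  have hFsucc : ∀ n, (F (n + 1)).1 = insert (step (F n).1 (F n).2).choose (F n).1 :=
    fun n => rfl
  apply hart
  refine ⟨fun n => (F n).1.inf id,
    fun n => grSub_finsetInf hℳ (fun P hP => hS P ((F n).2 hP)), fun n => ?_⟩
  show (F (n + 1)).1.inf id < (F n).1.inf id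
  rw [hFsucc n, Finset.inf_insert]
  have := (step (F n).1 (F n).2).choose_spec.2
  rw [inf_comm]
  exact this

theorem grRad_eq_bot_of_five {k : ℕ} (N : Fin k → AddSubgroup M)
    (hsimp : ∀ i, ℳ.IsGrSimpleSub (N i)) (hsup : (⨆ i, N i) = ⊤)
    (hind : ∀ i : Fin k, N i ⊓ (⨆ j, ⨆ (_ : j ≠ i), N j) = ⊥) :
    ℳ.grRad = ⊥ := by
  classical
  set c : Fin k → AddSubgroup M := fun i => ⨆ j, ⨆ (_ : j ≠ i), N j with hc
  have hind' : ∀ i : Fin k, N i ⊓ c i = ⊥ := fun i => hind i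
  have hcgr : ∀ i, ℳ.IsGrSub (c i) :=
    fun i => grSub_iSup hℳ (fun j => grSub_iSup hℳ (fun _ => (hsimp j).1))
  have hsplit : ∀ i, N i ⊔ c i = ⊤ := by
    intro i
    rw [eq_top_iff, ← hsup]
    refine iSup_le fun j => ?_
    by_cases hj : j = i
    · exact hj ▸ le_sup_left
    · exact le_trans (le_iSup₂ (f := fun j (_ : j ≠ i) => N j) j hj) le_sup_right
  have hcoatom : ∀ i, ℳ.IsGrMaximalSub (c i) := by
    intro i
    refine ⟨hcgr i, ?_, ?_⟩
    · intro hc_top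
      have hb := hind' i
      rw [hc_top, inf_top_eq] at hb
      exact (hsimp i).2.1 hb
    · intro L hL hciL
      by_cases hLtop : L = ⊤
      · right; exact hLtop
      · left
        rcases (hsimp i).2.2 (L ⊓ N i) (grSub_inf hℳ hL (hsimp i).1) inf_le_right with h | h
        · have hm := modular_eq (z := c i) (d := L) (c := N i) hciL
          rw [h, sup_bot_eq, sup_comm (c i) (N i), hsplit i, inf_top_eq] at hm
          exact hm
        · exfalso
          apply hLtop
          rw [eq_top_iff, ← hsplit i]
          exact sup_le (h ▸ inf_le_left) hciL
  have key : ∀ s : Finset (Fin k), s.inf c ≤ sᶜ.sup N := by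
    intro s
    induction s using Finset.induction_on with
    | empty =>
      have hh : ((∅ : Finset (Fin k))ᶜ).sup N = ⊤ := by
        rw [Finset.compl_empty, eq_top_iff, ← hsup]
        exact iSup_le fun j => Finset.le_sup (Finset.mem_univ j)
      rw [Finset.inf_empty, hh]
    | @insert i s his ih =>
      rw [Finset.inf_insert]
      have hCompl : sᶜ = insert i ((insert i s)ᶜ) := by
        ext j
        by_cases hj : j = i <;>
          simp [Finset.mem_compl, Finset.mem_insert, hj, his]
      have hu : ((insert i s)ᶜ).sup N ≤ c i := by
        apply Finset.sup_le
        intro j hj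
        rw [Finset.mem_compl, Finset.mem_insert] at hj
        push_neg at hj
        exact le_iSup₂ (f := fun j (_ : j ≠ i) => N j) j hj.1
      calc c i ⊓ s.inf c ≤ c i ⊓ sᶜ.sup N := inf_le_inf_left _ ih
        _ = c i ⊓ (((insert i s)ᶜ).sup N ⊔ N i) := by
            rw [hCompl, Finset.sup_insert, sup_comm (N i) _]
        _ = ((insert i s)ᶜ).sup N ⊔ (c i ⊓ N i) := modular_eq hu
        _ ≤ ((insert i s)ᶜ).sup N := by
            rw [inf_comm (c i) (N i), hind' i, sup_bot_eq]
  have hkey : (Finset.univ : Finset (Fin k)).inf c ≤ ⊥ := by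
    have hh := key Finset.univ
    rwa [Finset.compl_univ, Finset.sup_empty] at hh
  rw [eq_bot_iff]
  refine le_trans ?_ hkey
  exact Finset.le_inf fun i _ => sInf_le (hcoatom i)

theorem le_sSup_simples {t : Finset (AddSubgroup M)} (ht : ∀ P ∈ t, ℳ.IsGrMaximalSub P) :
    ∀ x : AddSubgroup M, ℳ.IsGrSub x → x ⊓ t.inf id = ⊥ →
      x ≤ sSup {P : AddSubgroup M | ℳ.IsGrSimpleSub P} := by
  classical
  induction t using Finset.induction_on with
  | empty =>
    intro x hgx hx
    rw [Finset.inf_empty, inf_top_eq] at hx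
    rw [hx]
    exact bot_le
  | @insert cc t hct ih =>
    intro x hgx hx
    have hcc := ht cc (Finset.mem_insert_self _ _)
    have hts : ∀ P ∈ t, ℳ.IsGrMaximalSub P := fun P hP => ht P (Finset.mem_insert_of_mem hP)
    have hgrt : ℳ.IsGrSub (t.inf id) := grSub_finsetInf hℳ (fun P hP => (hts P hP).1)
    set y := x ⊓ t.inf id with hy
    have hgy : ℳ.IsGrSub y := grSub_inf hℳ hgx hgrt
    have hyc : y ⊓ cc = ⊥ := by
      calc y ⊓ cc = x ⊓ (t.inf id ⊓ cc) := by rw [hy, inf_assoc]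
        _ = x ⊓ (id cc ⊓ t.inf id) := by rw [inf_comm (t.inf id) _]; rfl
        _ = ⊥ := by rw [← Finset.inf_insert]; exact hx
    by_cases hybot : y = ⊥
    · exact ih hts x hgx hybot
    · have hysimple : ℳ.IsGrSimpleSub y := by
        refine ⟨hgy, hybot, fun L hgL hLy => ?_⟩
        by_cases hLbot : L = ⊥
        · left; exact hLbot
        · right
          have hLc : ¬ L ≤ cc := by
            intro hLc
            exact hLbot (le_bot_iff.mp (hyc ▸ le_inf hLy hLc))
          have h1 : L ⊔ cc = ⊤ := by
            rcases hcc.2.2 (L ⊔ cc) (grSub_sup hℳ hgL hcc.1) le_sup_right with h | h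
            · exact absurd (le_trans le_sup_left h.le) hLc
            · exact h
          have hm := modular_eq (z := L) (d := y) (c := cc) hLy
          rw [h1, inf_top_eq, hyc, sup_bot_eq] at hm
          exact hm.symm
      have hyc2 : cc ⊔ y = ⊤ := by
        rcases hcc.2.2 (cc ⊔ y) (grSub_sup hℳ hcc.1 hgy) le_sup_left with h | h
        · exfalso
          have hylecc : y ≤ cc := le_trans le_sup_right h.le
          exact hybot (le_bot_iff.mp (hyc ▸ le_inf le_rfl hylecc))
        · exact h
      have hyx : y ≤ x := inf_le_left
      have hxdec : x = (x ⊓ cc) ⊔ y := by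
        have hm := modular_eq (z := y) (d := x) (c := cc) hyx
        rw [sup_comm y cc, hyc2, inf_top_eq] at hm
        exact hm.trans (sup_comm _ _)
      have h2 : (x ⊓ cc) ⊓ t.inf id = ⊥ := by
        calc (x ⊓ cc) ⊓ t.inf id = x ⊓ (id cc ⊓ t.inf id) := by rw [inf_assoc]; rfl
          _ = ⊥ := by rw [← Finset.inf_insert]; exact hx
      have h3 := ih hts (x ⊓ cc) (grSub_inf hℳ hgx hcc.1) h2
      rw [hxdec]
      exact sup_le h3 (le_sSup hysimple)

end Infra5
section Infra6
set_option linter.unusedSectionVars false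
set_option linter.unusedVariables false
set_option maxHeartbeats 1000000

open GModData

variable {Γ : Type u} [Groupoid.{u} Γ] {R : Type u} [AddCommGroup R] {M : Type u}
  [AddCommGroup M] {𝒜 : GRingData Γ R} {ℳ : GModData Γ R M} (hℳ : ℳ.IsGraded 𝒜)

theorem finset_subset_chain_union {α : Type*} {C : Set (Set α)} (hC : IsChain (· ⊆ ·) C)
    (hne : C.Nonempty) {t : Finset α} (h : ↑t ⊆ ⋃₀ C) : ∃ s ∈ C, ↑t ⊆ s := by
  classical
  induction t using Finset.induction_on with
  | empty => exact ⟨hne.choose, hne.choose_spec, by simp⟩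
  | @insert a t hat ih =>
    rw [Finset.coe_insert, Set.insert_subset_iff] at h
    obtain ⟨s1, hs1C, hts1⟩ := ih h.2
    obtain ⟨s2, hs2C, ha2⟩ := Set.mem_sUnion.mp h.1
    rcases eq_or_ne s1 s2 with rfl | hne12
    · exact ⟨s1, hs1C, by rw [Finset.coe_insert]; exact Set.insert_subset ha2 hts1⟩
    · rcases hC hs1C hs2C hne12 with hle | hle
      · exact ⟨s2, hs2C, by rw [Finset.coe_insert]; exact Set.insert_subset ha2 (hts1.trans hle)⟩
      · exact ⟨s1, hs1C, by rw [Finset.coe_insert]; exact Set.insert_subset (hle ha2) hts1⟩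

/-- Elementwise independence of a set of submodules. -/
def SIndep (s : Set (AddSubgroup M)) : Prop :=
  ∀ a ∈ s, ∀ x : M, x ∈ a → x ∈ sSup (s \ {a}) → x = 0

include hℳ

theorem five_of_fingrcog (hss : ℳ.GrSemisimple) (hfc : ℳ.FinGrCogenerated) :
    ∃ (k : ℕ) (N : Fin k → AddSubgroup M), (∀ i, ℳ.IsGrSimpleSub (N i)) ∧
      (⨆ i, N i) = ⊤ ∧ ∀ i : Fin k, N i ⊓ (⨆ j, ⨆ (_ : j ≠ i), N j) = ⊥ := by
  classical
  set A := {P : AddSubgroup M | ℳ.IsGrSimpleSub P} with hA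
  have hchaincond : ∀ C ⊆ {s : Set (AddSubgroup M) | s ⊆ A ∧ SIndep s},
      IsChain (· ⊆ ·) C → C.Nonempty →
      ∃ ub ∈ {s : Set (AddSubgroup M) | s ⊆ A ∧ SIndep s}, ∀ s ∈ C, s ⊆ ub := by
    intro C hCsub hchain hCne
    refine ⟨⋃₀ C, ⟨Set.sUnion_subset fun c hc => (hCsub hc).1, ?_⟩,
        fun c hc => Set.subset_sUnion_of_mem hc⟩
    intro a ha x hxa hxsup
    obtain ⟨t, htsub, hxt⟩ := mem_sSup_iff_finsetSup.mp hxsup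
    obtain ⟨s1, hs1C, hts1⟩ := finset_subset_chain_union hchain hCne
      (htsub.trans Set.diff_subset)
    obtain ⟨s2, hs2C, ha2⟩ := Set.mem_sUnion.mp ha
    obtain ⟨s3, hs3C, hts3, has3⟩ : ∃ s3 ∈ C, ↑t ⊆ s3 ∧ a ∈ s3 := by
      rcases eq_or_ne s1 s2 with rfl | hne12
      · exact ⟨s1, hs1C, hts1, ha2⟩
      · rcases hchain hs1C hs2C hne12 with hle | hle
        · exact ⟨s2, hs2C, hts1.trans hle, ha2⟩
        · exact ⟨s1, hs1C, hts1, hle ha2⟩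
    apply (hCsub hs3C).2 a has3 x hxa
    have hle : t.sup id ≤ sSup (s3 \ {a}) :=
      Finset.sup_le fun P hP => le_sSup ⟨hts3 hP, (htsub hP).2⟩
    exact hle hxt
  have hzorn : ∃ s, Maximal (fun s => s ⊆ A ∧ SIndep s) s := by
    obtain ⟨m, -, hmax⟩ := zorn_subset_nonempty {s | s ⊆ A ∧ SIndep s} hchaincond ∅
      ⟨Set.empty_subset A, fun a ha => absurd ha (Set.notMem_empty a)⟩
    exact ⟨m, hmax⟩
  obtain ⟨s, hmax⟩ := hzorn
  obtain ⟨hsA, hsInd⟩ := hmax.1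
  have hsgr : ∀ P ∈ s, ℳ.IsGrSub P := fun P hP => (hsA hP).1
  have hssuptop : sSup s = ⊤ := by
    by_contra hnetop
    have hatom : ∃ a ∈ A, ¬ a ≤ sSup s := by
      by_contra h2
      push_neg at h2
      have hh : sSup A ≤ sSup s := sSup_le h2
      rw [hss] at hh
      exact hnetop (le_antisymm le_top hh)
    obtain ⟨a, haA, hale⟩ := hatom
    have hanots : a ∉ s := fun has => hale (le_sSup has)
    have hdisj : ∀ x : M, x ∈ a → x ∈ sSup s → x = 0 := by
      have hK : ℳ.IsGrSub (a ⊓ sSup s) := grSub_inf hℳ haA.1 (grSub_sSup hℳ hsgr)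
      rcases haA.2.2 _ hK inf_le_left with h | h
      · intro x hx1 hx2
        have hh : x ∈ (⊥ : AddSubgroup M) := h ▸ (⟨hx1, hx2⟩ : x ∈ a ⊓ sSup s)
        simpa using hh
      · exact absurd (inf_eq_left.mp h) hale
    have hins : insert a s ⊆ A ∧ SIndep (insert a s) := by
      refine ⟨Set.insert_subset haA hsA, ?_⟩
      intro b hb x hxb hxsup
      rcases hb with rfl | hbs
      · have hle : sSup (insert b s \ {b}) ≤ sSup s := by
          apply sSup_le_sSup
          rintro P ⟨hP1, hP2⟩
          rcases hP1 with rfl | hP1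
          · exact absurd rfl hP2
          · exact hP1
        exact hdisj x hxb (hle hxsup)
      · have hab : a ≠ b := fun h => hanots (h ▸ hbs)
        have hset : insert a s \ {b} = insert a (s \ {b}) := by
          ext p
          simp only [Set.mem_diff, Set.mem_insert_iff, Set.mem_singleton_iff]
          constructor
          · rintro ⟨(rfl | hp), hpb⟩
            · exact Or.inl rfl
            · exact Or.inr ⟨hp, hpb⟩
          · rintro (rfl | ⟨hp, hpb⟩)
            · exact ⟨Or.inl rfl, hab⟩
            · exact ⟨Or.inr hp, hpb⟩
        rw [hset, sSup_insert] at hxsup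
        obtain ⟨q, hq, p, hp, hqp⟩ := AddSubgroup.mem_sup.mp hxsup
        have hq2 : q ∈ sSup s := by
          have h3 : sSup (s \ {b}) ≤ sSup s := sSup_le_sSup Set.diff_subset
          have h1 : x - p ∈ sSup s :=
            sub_mem ((le_sSup hbs) hxb) (h3 hp)
          have h2 : q = x - p := eq_sub_of_add_eq hqp
          rwa [h2]
        have hq0 : q = 0 := hdisj q hq hq2
        have hxp : x = p := by rw [← hqp, hq0, zero_add]
        rw [hxp]
        exact hsInd b hbs p (hxp ▸ hxb) hp
    have hsub := hmax.2 hins (Set.subset_insert a s)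
    exact hanots (hsub (Set.mem_insert a s))
  set S := (fun a => sSup (s \ {a})) '' s with hS
  have hSgr : ∀ P ∈ S, ℳ.IsGrSub P := by
    rintro P ⟨a, has, rfl⟩
    exact grSub_sSup hℳ (fun Q hQ => hsgr Q hQ.1)
  have hSinf : sInf S = ⊥ := by
    rw [eq_bot_iff]
    intro x hx
    rw [AddSubgroup.mem_sInf] at hx
    have hxs : x ∈ sSup s := by rw [hssuptop]; trivial
    obtain ⟨t, hts, hxt⟩ := mem_sSup_iff_finsetSup.mp hxs
    have main : ∀ (n : ℕ) (t : Finset (AddSubgroup M)), t.card ≤ n → ↑t ⊆ s →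
        x ∈ t.sup id → x ∈ (⊥ : AddSubgroup M) := by
      intro n
      induction n with
      | zero =>
        intro t hcard hts hxt
        rw [Nat.le_zero, Finset.card_eq_zero] at hcard
        subst hcard
        simpa using hxt
      | succ n ih =>
        intro t hcard hts hxt
        rcases Finset.eq_empty_or_nonempty t with rfl | ⟨a, hat⟩
        · simpa using hxt
        · have has : a ∈ s := hts hat
          have hxS : x ∈ sSup (s \ {a}) := hx _ ⟨a, has, rfl⟩
          have htsup : t.sup id = a ⊔ (t.erase a).sup id := by
            conv_lhs => rw [← Finset.insert_erase hat]
            rw [Finset.sup_insert]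
            rfl
          rw [htsup] at hxt
          obtain ⟨q, hq, p, hp, hqp⟩ := AddSubgroup.mem_sup.mp hxt
          have hperase : p ∈ sSup (s \ {a}) := by
            have hh : (t.erase a).sup id ≤ sSup (s \ {a}) :=
              Finset.sup_le fun P hP =>
                le_sSup ⟨hts (Finset.mem_of_mem_erase hP), (Finset.mem_erase.mp hP).1⟩
            exact hh hp
          have hq2 : q ∈ sSup (s \ {a}) := by
            have h1 : x - p ∈ sSup (s \ {a}) := sub_mem hxS hperase
            have h2 : q = x - p := eq_sub_of_add_eq hqp
            rwa [h2]
          have hq0 : q = 0 := hsInd a has q hq hq2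
          have hxp : x = p := by rw [← hqp, hq0, zero_add]
          have hcard' : (t.erase a).card ≤ n := by
            have hh := Finset.card_erase_lt_of_mem hat
            omega
          exact ih (t.erase a) hcard'
            (fun P hP => hts (Finset.mem_of_mem_erase hP)) (hxp ▸ hp)
    exact main t.card t le_rfl hts hxt
  obtain ⟨t', ht'S, ht'inf⟩ := hfc S hSgr hSinf
  have hf : ∀ y : AddSubgroup M, ∃ a : AddSubgroup M, y ∈ t' → a ∈ s ∧ sSup (s \ {a}) = y := by
    intro y
    by_cases hy : y ∈ t'
    · obtain ⟨a, has, hay⟩ := ht'S hy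
      exact ⟨a, fun _ => ⟨has, hay⟩⟩
    · exact ⟨⊥, fun h => absurd h hy⟩
  choose g hg using hf
  have hsfin : s ⊆ ↑(t'.image g) := by
    intro b hbs
    by_contra hbF
    have hbbot : b ≤ t'.inf id := by
      apply Finset.le_inf
      intro y hy
      obtain ⟨hgY, hgy⟩ := hg y hy
      have hbne : b ≠ g y := fun h => hbF (h ▸ Finset.mem_coe.mpr (Finset.mem_image_of_mem g hy))
      show b ≤ id y
      rw [id, ← hgy]
      exact le_sSup ⟨hbs, hbne⟩
    rw [ht'inf] at hbbot
    exact (hsA hbs).2.1 (le_bot_iff.mp hbbot)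
  have hsfinite : s.Finite := Set.Finite.subset (Finset.finite_toSet _) hsfin
  set ts := hsfinite.toFinset with htsdef
  have htscoe : (↑ts : Set (AddSubgroup M)) = s := Set.Finite.coe_toFinset hsfinite
  have htsmem : ∀ P, P ∈ ts ↔ P ∈ s := by
    intro P
    rw [← htscoe]
    rfl
  set e := ts.equivFin with he
  set N : Fin ts.card → AddSubgroup M := fun i => (e.symm i : AddSubgroup M) with hNdef
  have hNmem : ∀ i, N i ∈ s := fun i => (htsmem _).mp (e.symm i).2
  have hNinj : Function.Injective N := by
    intro i j hij
    exact e.symm.injective (Subtype.ext hij)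
  refine ⟨ts.card, N, fun i => hsA (hNmem i), ?_, ?_⟩
  · apply le_antisymm le_top
    rw [← hssuptop]
    apply sSup_le
    intro P hP
    have hPts : P ∈ ts := (htsmem P).mpr hP
    have hPe : P = N (e ⟨P, hPts⟩) := by
      rw [hNdef]
      simp only [Equiv.symm_apply_apply]
    rw [hPe]
    exact le_iSup N (e ⟨P, hPts⟩)
  · intro i
    rw [eq_bot_iff]
    intro x hx
    have hx1 : x ∈ N i := hx.1
    have hx2 : x ∈ (⨆ j, ⨆ (_ : j ≠ i), N j) := hx.2
    have hle : (⨆ j, ⨆ (_ : j ≠ i), N j) ≤ sSup (s \ {N i}) := by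
      refine iSup_le fun j => iSup_le fun hj => ?_
      exact le_sSup ⟨hNmem j, fun hh => hj (hNinj hh)⟩
    rw [AddSubgroup.mem_bot]
    exact hsInd (N i) (hNmem i) x hx1 (hle hx2)

end Infra6
section Infra7
set_option linter.unusedSectionVars false
set_option linter.unusedVariables false

open GModData

variable {Γ : Type u} [Groupoid.{u} Γ] {R : Type u} [AddCommGroup R] {M : Type u}
  [AddCommGroup M] {𝒜 : GRingData Γ R} {ℳ : GModData Γ R M} (hℳ : ℳ.IsGraded 𝒜)

theorem semisimple_of_five {k : ℕ} (N : Fin k → AddSubgroup M)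
    (hsimp : ∀ i, ℳ.IsGrSimpleSub (N i)) (hsup : (⨆ i, N i) = ⊤) :
    ℳ.GrSemisimple := by
  rw [GModData.GrSemisimple, eq_top_iff, ← hsup]
  exact iSup_le fun i => le_sSup (hsimp i)

theorem finjoin_of_five {k : ℕ} (N : Fin k → AddSubgroup M)
    (hsimp : ∀ i, ℳ.IsGrSimpleSub (N i)) (hsup : (⨆ i, N i) = ⊤) :
    ∃ t : Finset (AddSubgroup M), (∀ P ∈ t, ℳ.IsGrSimpleSub P) ∧ t.sup id = ⊤ := by
  classical
  refine ⟨Finset.image N Finset.univ, ?_, ?_⟩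
  · intro P hP
    obtain ⟨i, -, rfl⟩ := Finset.mem_image.mp hP
    exact hsimp i
  · rw [Finset.sup_image]
    rw [show (id ∘ N) = N from rfl, ← hsup]
    exact le_antisymm (Finset.sup_le fun i _ => le_iSup N i)
      (iSup_le fun i => Finset.le_sup (Finset.mem_univ i))

include hℳ

theorem chains_of_five {k : ℕ} (N : Fin k → AddSubgroup M)
    (hsimp : ∀ i, ℳ.IsGrSimpleSub (N i)) (hsup : (⨆ i, N i) = ⊤) :
    ℳ.GrNoetherian ∧ ℳ.GrArtinian := by
  obtain ⟨t, ht, htop⟩ := finjoin_of_five (ℳ := ℳ) N hsimp hsup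
  obtain ⟨h1, h2⟩ := noChain_finsetSup hℳ ht
  rw [htop] at h1 h2
  exact ⟨fun ⟨c, hc1, hc2⟩ => h1 ⟨c, hc1, fun n => ⟨bot_le, le_top⟩, hc2⟩,
    fun ⟨c, hc1, hc2⟩ => h2 ⟨c, hc1, fun n => ⟨bot_le, le_top⟩, hc2⟩⟩

omit hℳ in
theorem coatom_finset_of_rad_fincog (hrad : ℳ.grRad = ⊥) (hfc : ℳ.FinGrCogenerated) :
    ∃ t : Finset (AddSubgroup M), (∀ P ∈ t, ℳ.IsGrMaximalSub P) ∧ t.inf id = ⊥ := by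
  have hinf : sInf {P : AddSubgroup M | ℳ.IsGrMaximalSub P} = ⊥ := hrad
  obtain ⟨t, htS, htinf⟩ := hfc _ (fun P hP => hP.1) hinf
  exact ⟨t, fun P hP => htS hP, htinf⟩

end Infra7
/-- Let `R` be a `Γ`-graded ring and `M` a `Γ`-graded right
`R`-module. The following are equivalent: (1) `M` is gr-semisimple and finitely
generated; (2) `M` is gr-semisimple and gr-noetherian; (3) `M` is gr-semisimple
and gr-artinian; (4) `M` is gr-semisimple and finitely gr-cogenerated; (5) `M`
is a finite (internal) direct sum of gr-simple graded submodules;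
(6) `rad^gr(M) = 0` and `M` is finitely gr-cogenerated; (7) `rad^gr(M) = 0` and
`M` is gr-artinian. -/
theorem grSemisimple_fg_tfae
    {Γ : Type u} [Groupoid.{u} Γ] {R : Type u} [AddCommGroup R] {M : Type u}
    [AddCommGroup M] (𝒜 : GRingData Γ R) (h𝒜 : 𝒜.IsObjectUnital)
    (ℳ : GModData Γ R M) (hℳ : ℳ.IsGraded 𝒜) :
    List.TFAE [
      ℳ.GrSemisimple ∧ ℳ.FG,
      ℳ.GrSemisimple ∧ ℳ.GrNoetherian,
      ℳ.GrSemisimple ∧ ℳ.GrArtinian,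
      ℳ.GrSemisimple ∧ ℳ.FinGrCogenerated,
      ∃ (k : ℕ) (N : Fin k → AddSubgroup M), (∀ i, ℳ.IsGrSimpleSub (N i)) ∧
        (⨆ i, N i) = ⊤ ∧ ∀ i : Fin k, N i ⊓ (⨆ j, ⨆ (_ : j ≠ i), N j) = ⊥,
      ℳ.grRad = ⊥ ∧ ℳ.FinGrCogenerated,
      ℳ.grRad = ⊥ ∧ ℳ.GrArtinian ] := by
  tfae_have 1 → 5 := fun h => five_of_finjoin hℳ (exists_finjoin_of_fg hℳ h.1 h.2)
  tfae_have 5 → 1 := fun ⟨k, N, hsimp, hsup, hind⟩ =>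
    ⟨semisimple_of_five N hsimp hsup, fg_of_finjoin hℳ h𝒜 (finjoin_of_five N hsimp hsup)⟩
  tfae_have 5 → 2 := fun ⟨k, N, hsimp, hsup, hind⟩ =>
    ⟨semisimple_of_five N hsimp hsup, (chains_of_five hℳ N hsimp hsup).1⟩
  tfae_have 2 → 5 := fun h =>
    five_of_finjoin hℳ (exists_finjoin_of_noetherian hℳ h.1 h.2)
  tfae_have 5 → 3 := fun ⟨k, N, hsimp, hsup, hind⟩ =>
    ⟨semisimple_of_five N hsimp hsup, (chains_of_five hℳ N hsimp hsup).2⟩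
  tfae_have 3 → 4 := fun h => ⟨h.1, finGrCog_of_artinian hℳ h.2⟩
  tfae_have 4 → 5 := fun h => five_of_fingrcog hℳ h.1 h.2
  tfae_have 5 → 6 := fun ⟨k, N, hsimp, hsup, hind⟩ =>
    ⟨grRad_eq_bot_of_five hℳ N hsimp hsup hind,
      finGrCog_of_artinian hℳ (chains_of_five hℳ N hsimp hsup).2⟩
  tfae_have 6 → 7 := by
    rintro ⟨hrad, hfc⟩
    refine ⟨hrad, ?_⟩
    obtain ⟨t, ht, htinf⟩ := coatom_finset_of_rad_fincog hrad hfc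
    have hh := (noChain_finsetInf hℳ ht).2
    rw [htinf] at hh
    exact fun ⟨c, hc1, hc2⟩ => hh ⟨c, hc1, fun n => ⟨bot_le, le_top⟩, hc2⟩
  tfae_have 7 → 5 := by
    rintro ⟨hrad, hart⟩
    obtain ⟨t, ht, htinf⟩ := coatom_finset_of_rad_fincog hrad (finGrCog_of_artinian hℳ hart)
    have hss : ℳ.GrSemisimple := by
      rw [GModData.GrSemisimple, eq_top_iff]
      refine le_sSup_simples hℳ ht ⊤ (grSub_top hℳ) ?_
      rw [top_inf_eq, htinf]
    have hnoe : ℳ.GrNoetherian := by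
      have hh := (noChain_finsetInf hℳ ht).1
      rw [htinf] at hh
      exact fun ⟨c, hc1, hc2⟩ => hh ⟨c, hc1, fun n => ⟨bot_le, le_top⟩, hc2⟩
    exact five_of_finjoin hℳ (exists_finjoin_of_noetherian hℳ hss hnoe)
  tfae_finish
end

section
/- Let R be a Γ-graded ring, γ a morphism of Γ, and a ∈ R_γ. The following are equivalent: (1) a ∈ rad^gr(R_R); (2) aR is gr-superfluous in the right R-module R; (3) 1_{r(γ)} − ax is right invertible in the ring R_{r(γ)} for every x ∈ R_{γ⁻¹}; (4) 1_{r(γ)} − ax is invertible in R_{r(γ)} for every x ∈ R_{γ⁻¹}; (5) Sa = 0 for every gr-simple Γ-graded right R-module S. -/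
open CategoryTheory

universe u

variable {Γ : Type u} [Groupoid.{u} Γ]

section Machinery

open Classical

variable {Γ : Type u} [Groupoid.{u} Γ] {R M : Type u} [AddCommGroup R] [AddCommGroup M]
variable {𝒜 : GRingData Γ R} {ℳ : GModData Γ R M}

namespace GModData.IsGraded

theorem smul_zero' (h : ℳ.IsGraded 𝒜) (m : M) : ℳ.smul m 0 = 0 := by
  have h2 : ℳ.smul m 0 = ℳ.smul m 0 + ℳ.smul m 0 := by
    simpa using h.smul_add m 0 0
  have := add_eq_left.mp h2.symm
  exact this

theorem zero_smul' (h : ℳ.IsGraded 𝒜) (r : R) : ℳ.smul 0 r = 0 := by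
  have h2 : ℳ.smul 0 r = ℳ.smul 0 r + ℳ.smul 0 r := by
    simpa using h.add_smul 0 0 r
  exact add_eq_left.mp h2.symm

theorem smul_neg' (h : ℳ.IsGraded 𝒜) (m : M) (r : R) : ℳ.smul m (-r) = -ℳ.smul m r := by
  have h2 : ℳ.smul m r + ℳ.smul m (-r) = 0 := by
    rw [← h.smul_add]; simpa using h.smul_zero' m
  exact eq_neg_of_add_eq_zero_right h2

theorem neg_smul' (h : ℳ.IsGraded 𝒜) (m : M) (r : R) : ℳ.smul (-m) r = -ℳ.smul m r := by
  have h2 : ℳ.smul m r + ℳ.smul (-m) r = 0 := by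
    rw [← h.add_smul]; simpa using h.zero_smul' r
  exact eq_neg_of_add_eq_zero_right h2

theorem smul_sub' (h : ℳ.IsGraded 𝒜) (m : M) (r s : R) :
    ℳ.smul m (r - s) = ℳ.smul m r - ℳ.smul m s := by
  rw [sub_eq_add_neg, h.smul_add, h.smul_neg', sub_eq_add_neg]

theorem sub_smul' (h : ℳ.IsGraded 𝒜) (m n : M) (r : R) :
    ℳ.smul (m - n) r = ℳ.smul m r - ℳ.smul n r := by
  rw [sub_eq_add_neg, h.add_smul, h.neg_smul', sub_eq_add_neg]

theorem smul_sum' (h : ℳ.IsGraded 𝒜) (m : M) {ι : Type*} (s : Finset ι) (f : ι → R) :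
    ℳ.smul m (∑ i ∈ s, f i) = ∑ i ∈ s, ℳ.smul m (f i) := by
  classical
  induction s using Finset.induction_on with
  | empty => simpa using h.smul_zero' m
  | insert a t hi ih => rw [Finset.sum_insert hi, Finset.sum_insert hi, h.smul_add, ih]

theorem sum_smul' (h : ℳ.IsGraded 𝒜) {ι : Type*} (s : Finset ι) (f : ι → M) (r : R) :
    ℳ.smul (∑ i ∈ s, f i) r = ∑ i ∈ s, ℳ.smul (f i) r := by
  classical
  induction s using Finset.induction_on with
  | empty => simpa using h.zero_smul' r
  | insert a t hi ih => rw [Finset.sum_insert hi, Finset.sum_insert hi, h.add_smul, ih]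

end GModData.IsGraded

/-- `R` is a graded module over itself. -/
theorem GRingData.IsObjectUnital.toMod_isGraded (h : 𝒜.IsObjectUnital) :
    𝒜.toMod.IsGraded 𝒜 where
  add_smul := h.right_distrib
  smul_add := h.left_distrib
  smul_mul m a b := (h.mul_assoc m a b).symm
  decompose := h.decompose
  independent := h.independent
  smul_mem := h.mul_mem
  smul_eq_zero := h.mul_eq_zero
  smul_one := h.mul_one

namespace GModData.IsGraded

/-- The degree-`δ` component of `x`. -/
noncomputable def grProj (h : ℳ.IsGraded 𝒜) (δ : GrIdx Γ) (x : M) : M :=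
  if _ : δ ∈ (h.decompose x).choose then (h.decompose x).choose_spec.choose δ else 0

theorem grProj_eq (h : ℳ.IsGraded 𝒜) (δ : GrIdx Γ) {x : M} {s : Finset (GrIdx Γ)}
    {cf : GrIdx Γ → M} (hmem : ∀ g ∈ s, cf g ∈ ℳ.component g.2.2)
    (hx : x = ∑ g ∈ s, cf g) :
    h.grProj δ x = if δ ∈ s then cf δ else 0 := by
  classical
  obtain ⟨hmem', hx'⟩ := (h.decompose x).choose_spec.choose_spec
  set t := (h.decompose x).choose with ht
  set cg := (h.decompose x).choose_spec.choose with hcg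
  have key : (if δ ∈ t then cg δ else 0) = (if δ ∈ s then cf δ else 0) := by
    by_cases hin : δ ∈ t ∪ s
    · have hz : ∑ g ∈ t ∪ s,
          ((if g ∈ t then cg g else 0) - (if g ∈ s then cf g else 0)) = 0 := by
        rw [Finset.sum_sub_distrib, Finset.sum_ite_mem, Finset.sum_ite_mem,
          Finset.union_inter_cancel_left, Finset.union_inter_cancel_right, ← hx', ← hx,
          sub_self]
      have := h.independent (t ∪ s)
        (fun g => (if g ∈ t then cg g else 0) - (if g ∈ s then cf g else 0)) ?_ hz δ hin
      · exact sub_eq_zero.mp this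
      · intro g _
        refine sub_mem ?_ ?_ <;> split
        · exact hmem' g ‹_›
        · exact zero_mem _
        · exact hmem g ‹_›
        · exact zero_mem _
    · rw [if_neg (fun hc => hin (Finset.mem_union_left _ hc)),
        if_neg (fun hc => hin (Finset.mem_union_right _ hc))]
  rw [grProj]
  split
  · rw [← key, if_pos ‹_›]
  · rw [← key, if_neg ‹_›]

theorem grProj_mem (h : ℳ.IsGraded 𝒜) (δ : GrIdx Γ) (x : M) :
    h.grProj δ x ∈ ℳ.component δ.2.2 := by
  rw [grProj]
  split
  · exact (h.decompose x).choose_spec.choose_spec.1 δ ‹_›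
  · exact zero_mem _

theorem grProj_zero (h : ℳ.IsGraded 𝒜) (δ : GrIdx Γ) : h.grProj δ 0 = 0 := by
  classical
  rw [h.grProj_eq δ (s := ∅) (cf := fun _ => 0) (by simp) (by simp)]
  simp

theorem grProj_add (h : ℳ.IsGraded 𝒜) (δ : GrIdx Γ) (x y : M) :
    h.grProj δ (x + y) = h.grProj δ x + h.grProj δ y := by
  classical
  obtain ⟨s, cf, hcf, hxs⟩ := h.decompose x
  obtain ⟨t, cg, hcg, hyt⟩ := h.decompose y
  have hxy : x + y = ∑ g ∈ s ∪ t,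
      ((if g ∈ s then cf g else 0) + (if g ∈ t then cg g else 0)) := by
    rw [Finset.sum_add_distrib, Finset.sum_ite_mem, Finset.sum_ite_mem,
      Finset.union_inter_cancel_left, Finset.union_inter_cancel_right, ← hxs, ← hyt]
  rw [h.grProj_eq δ (fun g _ => by
      refine add_mem ?_ ?_ <;> split
      · exact hcf g ‹_›
      · exact zero_mem _
      · exact hcg g ‹_›
      · exact zero_mem _) hxy,
    h.grProj_eq δ hcf hxs, h.grProj_eq δ hcg hyt]
  by_cases hs : δ ∈ s <;> by_cases ht : δ ∈ t <;>
    simp [hs, ht, Finset.mem_union]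

theorem grProj_neg (h : ℳ.IsGraded 𝒜) (δ : GrIdx Γ) (x : M) :
    h.grProj δ (-x) = -h.grProj δ x := by
  have := h.grProj_add δ x (-x)
  rw [add_neg_cancel, h.grProj_zero] at this
  exact eq_neg_of_add_eq_zero_right this.symm

theorem grProj_finsum (h : ℳ.IsGraded 𝒜) (δ : GrIdx Γ) {ι : Type*} (s : Finset ι)
    (f : ι → M) : h.grProj δ (∑ i ∈ s, f i) = ∑ i ∈ s, h.grProj δ (f i) := by
  classical
  induction s using Finset.induction_on with
  | empty => simpa using h.grProj_zero δ
  | insert a t hi ih =>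
                    rw [Finset.sum_insert hi, Finset.sum_insert hi, h.grProj_add, ih]

theorem grProj_of_mem (h : ℳ.IsGraded 𝒜) {g f : Γ} {σ : g ⟶ f} {x : M}
    (hx : x ∈ ℳ.component σ) : h.grProj ⟨g, f, σ⟩ x = x := by
  classical
  rw [h.grProj_eq ⟨g, f, σ⟩ (s := {⟨g, f, σ⟩}) (cf := fun _ => x) ?_ (by simp)]
  · simp
  · intro g' hg'
    rw [Finset.mem_singleton] at hg'
    subst hg'
    exact hx

theorem grProj_of_mem_ne (h : ℳ.IsGraded 𝒜) {g f : Γ} {σ : g ⟶ f} {x : M}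
    (hx : x ∈ ℳ.component σ) (δ : GrIdx Γ) (hne : (⟨g, f, σ⟩ : GrIdx Γ) ≠ δ) :
    h.grProj δ x = 0 := by
  classical
  rw [h.grProj_eq δ (s := {⟨g, f, σ⟩}) (cf := fun _ => x) ?_ (by simp)]
  · rw [if_neg]
    intro hc
    rw [Finset.mem_singleton] at hc
    exact hne hc.symm
  · intro g' hg'
    rw [Finset.mem_singleton] at hg'
    subst hg'
    exact hx

theorem gridx_eq_cancel {Γ : Type u} [Groupoid.{u} Γ] {x g e c : Γ} {θ : x ⟶ e}
    {τ : g ⟶ e} (σ : e ⟶ c)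
    (h : (⟨x, c, θ ≫ σ⟩ : GrIdx Γ) = ⟨g, c, τ ≫ σ⟩) :
    (⟨x, e, θ⟩ : GrIdx Γ) = ⟨g, e, τ⟩ := by
  obtain ⟨rfl, h2⟩ := Sigma.mk.inj_iff.mp h
  obtain ⟨-, h4⟩ := Sigma.mk.inj_iff.mp (eq_of_heq h2)
  have h5 : θ ≫ σ = τ ≫ σ := eq_of_heq h4
  have h6 : θ = τ := by
    have := congrArg (fun z => z ≫ Groupoid.inv σ) h5
    simpa [Category.assoc, Groupoid.comp_inv] using this
  rw [h6]

theorem gridx_ne_of_cod_ne {Γ : Type u} [Groupoid.{u} Γ] {x y g h : Γ} {θ : x ⟶ y}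
    {τ : g ⟶ h} (hne : y ≠ h) : (⟨x, y, θ⟩ : GrIdx Γ) ≠ ⟨g, h, τ⟩ := by
  intro hc
  obtain ⟨rfl, h2⟩ := Sigma.mk.inj_iff.mp hc
  obtain ⟨h3, -⟩ := Sigma.mk.inj_iff.mp (eq_of_heq h2)
  exact hne h3

theorem grProj_smul (h : ℳ.IsGraded 𝒜) (hR : 𝒜.toMod.IsGraded 𝒜)
    {e c : Γ} (σ : e ⟶ c) {m : M} (hm : m ∈ ℳ.component σ)
    {g : Γ} (τ : g ⟶ e) (r : R) :
    h.grProj ⟨g, c, τ ≫ σ⟩ (ℳ.smul m r) = ℳ.smul m (hR.grProj ⟨g, e, τ⟩ r) := by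
  classical
  obtain ⟨s, cf, hcf, hr⟩ := hR.decompose r
  have h1 : ℳ.smul m r = ∑ δ ∈ s, ℳ.smul m (cf δ) := by
    rw [hr, h.smul_sum']
  rw [h1, h.grProj_finsum, hR.grProj_eq ⟨g, e, τ⟩ hcf hr]
  have h2 : ∀ δ ∈ s, h.grProj ⟨g, c, τ ≫ σ⟩ (ℳ.smul m (cf δ)) =
      if δ = (⟨g, e, τ⟩ : GrIdx Γ) then ℳ.smul m (cf δ) else 0 := by
    intro δ hδ
    by_cases hcase : δ = (⟨g, e, τ⟩ : GrIdx Γ)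
    · subst hcase
      rw [if_pos rfl]
      exact h.grProj_of_mem (h.smul_mem σ τ hm (hcf _ hδ))
    · rw [if_neg hcase]
      obtain ⟨x, y, θ⟩ := δ
      by_cases hy : y = e
      · subst hy
        refine h.grProj_of_mem_ne (h.smul_mem σ θ hm (hcf _ hδ)) _ ?_
        intro hc
        exact hcase (gridx_eq_cancel σ hc)
      · rw [h.smul_eq_zero σ θ hy hm (hcf _ hδ), h.grProj_zero]
  rw [Finset.sum_congr rfl h2, Finset.sum_ite_eq' s (⟨g, e, τ⟩ : GrIdx Γ)
    (fun δ => ℳ.smul m (cf δ))]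
  by_cases hmem : (⟨g, e, τ⟩ : GrIdx Γ) ∈ s
  · rw [if_pos hmem, if_pos hmem]
  · rw [if_neg hmem, if_neg hmem, h.smul_zero']

theorem grProj_mem_of_isGrSub (h : ℳ.IsGraded 𝒜) {N : AddSubgroup M}
    (hN : ℳ.IsGrSub N) {x : M} (hx : x ∈ N) (δ : GrIdx Γ) : h.grProj δ x ∈ N := by
  classical
  refine AddSubgroup.closure_induction ?_ ?_ ?_ ?_ (hN.2 x hx)
  · rintro y ⟨hyN, g', f', σ, hyσ⟩
    by_cases hc : (⟨g', f', σ⟩ : GrIdx Γ) = δ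
    · rw [← hc, h.grProj_of_mem hyσ]; exact hyN
    · rw [h.grProj_of_mem_ne hyσ δ hc]; exact zero_mem _
  · rw [h.grProj_zero]; exact zero_mem _
  · intro y z _ _ hy hz; rw [h.grProj_add]; exact add_mem hy hz
  · intro y _ hy; rw [h.grProj_neg]; exact neg_mem hy

end GModData.IsGraded

end Machinery

section Implications

open GModData.IsGraded

variable {Γ : Type u} [Groupoid.{u} Γ] {R : Type u} [AddCommGroup R]
variable {𝒜 : GRingData Γ R}

theorem principal_le_of_mem {X : AddSubgroup R} (hX : 𝒜.toMod.IsGrSub X) {a : R}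
    (haX : a ∈ X) : 𝒜.principal a ≤ X := by
  rw [GRingData.principal]
  refine (AddSubgroup.closure_le _).mpr ?_
  rintro _ ⟨b, rfl⟩
  exact hX.1 a haX b

theorem step12 (h𝒜 : 𝒜.IsObjectUnital) {a : R}
    (h1 : a ∈ 𝒜.toMod.grRad) :
    𝒜.toMod.GrSuperfluous (𝒜.principal a) := by
  intro X hX hsup
  by_cases haX : a ∈ X
  · exact top_le_iff.mp (by rw [← hsup]; exact sup_le (principal_le_of_mem hX haX) le_rfl)
  · exfalso
    set S : Set (AddSubgroup R) := {Y | 𝒜.toMod.IsGrSub Y ∧ X ≤ Y ∧ a ∉ Y} with hSdef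
    have hzorn : ∀ c ⊆ S, IsChain (· ≤ ·) c → ∀ y ∈ c, ∃ ub ∈ S, ∀ z ∈ c, z ≤ ub := by
      intro c hcS hchain y hy
      have hmem : ∀ x : R, x ∈ sSup c ↔ ∃ Y ∈ c, x ∈ Y := fun x =>
        AddSubgroup.mem_sSup_of_directedOn ⟨y, hy⟩ hchain.directedOn
      refine ⟨sSup c, ⟨⟨?_, ?_⟩, ?_, ?_⟩, fun z hz => le_sSup hz⟩
      · intro m hm r
        obtain ⟨Y, hYc, hmY⟩ := (hmem m).mp hm
        exact le_sSup hYc ((hcS hYc).1.1 m hmY r)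
      · intro n hn
        obtain ⟨Y, hYc, hnY⟩ := (hmem n).mp hn
        refine AddSubgroup.closure_mono ?_ ((hcS hYc).1.2 n hnY)
        intro x hx
        exact ⟨le_sSup hYc hx.1, hx.2⟩
      · exact le_trans (hcS hy).2.1 (le_sSup hy)
      · intro hc
        obtain ⟨Y, hYc, haY⟩ := (hmem a).mp hc
        exact (hcS hYc).2.2 haY
    obtain ⟨m, hXm, hm⟩ := zorn_le_nonempty₀ S hzorn X ⟨hX, le_rfl, haX⟩
    have hgrmax : 𝒜.toMod.IsGrMaximalSub m := by
      refine ⟨hm.1.1, ?_, ?_⟩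
      · intro hc
        exact hm.1.2.2 (hc ▸ AddSubgroup.mem_top a)
      · intro L hL hmL
        by_cases haL : a ∈ L
        · right
          exact top_le_iff.mp (by
            rw [← hsup]
            exact sup_le (principal_le_of_mem hL haL) (le_trans hm.1.2.1 hmL))
        · left
          exact le_antisymm (hm.2 ⟨hL, le_trans hm.1.2.1 hmL, haL⟩ hmL) hmL
    rw [GModData.grRad] at h1
    exact hm.1.2.2 (AddSubgroup.mem_sInf.mp h1 m hgrmax)

theorem step23 (h𝒜 : 𝒜.IsObjectUnital) {e f : Γ} (γ : e ⟶ f) {a : R}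
    (ha : a ∈ 𝒜.component γ)
    (h2 : 𝒜.toMod.GrSuperfluous (𝒜.principal a)) :
    ∀ x ∈ 𝒜.component (Groupoid.inv γ), ∃ u ∈ 𝒜.component (𝟙 f),
      𝒜.mul (𝒜.one f - 𝒜.mul a x) u = 𝒜.one f := by
  classical
  intro x₀ hx₀
  have hR : 𝒜.toMod.IsGraded 𝒜 := h𝒜.toMod_isGraded
  set b : R := 𝒜.one f - 𝒜.mul a x₀ with hbdef
  have hax : 𝒜.mul a x₀ ∈ 𝒜.component (𝟙 f) := by
    have := h𝒜.mul_mem γ (Groupoid.inv γ) ha hx₀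
    rwa [Groupoid.inv_comp] at this
  have hb : b ∈ 𝒜.component (𝟙 f) := sub_mem (h𝒜.one_mem f) hax
  set G : Set R := {z | ∃ r : R, z = 𝒜.mul b r} ∪
      {z | ∃ (g h' : Γ) (σ : g ⟶ h'), h' ≠ f ∧ z ∈ 𝒜.component σ} with hGdef
  set X : AddSubgroup R := AddSubgroup.closure G with hXdef
  have hXsmul : ∀ z ∈ X, ∀ r : R, 𝒜.mul z r ∈ X := by
    intro z hz
    refine AddSubgroup.closure_induction ?_ ?_ ?_ ?_ hz
    · rintro y (⟨r', rfl⟩ | ⟨g, h', σ, hne, hyσ⟩)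
      · intro r
        rw [h𝒜.mul_assoc]
        exact AddSubgroup.subset_closure (Or.inl ⟨_, rfl⟩)
      · intro r
        obtain ⟨s, cf, hcf, hr⟩ := hR.decompose r
        have hsum : 𝒜.mul y r = ∑ δ ∈ s, 𝒜.mul y (cf δ) := by
          rw [hr]; exact hR.smul_sum' y s cf
        rw [hsum]
        refine sum_mem ?_
        intro δ hδ
        obtain ⟨xx, yy, θ⟩ := δ
        by_cases hyy : yy = g
        · subst hyy
          exact AddSubgroup.subset_closure
            (Or.inr ⟨xx, h', θ ≫ σ, hne, h𝒜.mul_mem σ θ hyσ (hcf _ hδ)⟩)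
        · have h0 : 𝒜.mul y (cf ⟨xx, yy, θ⟩) = 0 :=
            h𝒜.mul_eq_zero σ θ hyy hyσ (hcf _ hδ)
          rw [h0]
          exact zero_mem _
    · intro r
      have h0 : 𝒜.mul (0 : R) r = 0 := hR.zero_smul' r
      rw [h0]; exact zero_mem _
    · intro y z _ _ hy hz r
      rw [h𝒜.right_distrib]
      exact add_mem (hy r) (hz r)
    · intro y _ hy r
      have hneg : 𝒜.mul (-y) r = -(𝒜.mul y r) := hR.neg_smul' y r
      rw [hneg]
      exact neg_mem (hy r)
  have hXgr : 𝒜.toMod.IsGrSub X := by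
    refine ⟨hXsmul, ?_⟩
    intro n hn
    have hGC : G ⊆ (AddSubgroup.closure
        {z : R | z ∈ X ∧ 𝒜.toMod.IsHomogeneous z} : AddSubgroup R) := by
      rintro y (⟨r, rfl⟩ | ⟨g, h', σ, hne, hyσ⟩)
      · obtain ⟨s, cf, hcf, hr⟩ := hR.decompose r
        have hsum : 𝒜.mul b r = ∑ δ ∈ s, 𝒜.mul b (cf δ) := by
          rw [hr]; exact hR.smul_sum' b s cf
        rw [hsum]
        refine sum_mem ?_
        intro δ hδ
        obtain ⟨xx, yy, θ⟩ := δ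
        by_cases hyy : yy = f
        · subst yy
          refine AddSubgroup.subset_closure
            ⟨?_, xx, f, θ ≫ 𝟙 f, h𝒜.mul_mem (𝟙 f) θ hb (hcf _ hδ)⟩
          exact AddSubgroup.subset_closure (Or.inl ⟨_, rfl⟩)
        · have h0 : 𝒜.mul b (cf ⟨xx, yy, θ⟩) = 0 :=
            h𝒜.mul_eq_zero (𝟙 f) θ hyy hb (hcf _ hδ)
          rw [h0]
          exact zero_mem _
      · exact AddSubgroup.subset_closure
          ⟨AddSubgroup.subset_closure (Or.inr ⟨g, h', σ, hne, hyσ⟩), g, h', σ, hyσ⟩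
    exact (AddSubgroup.closure_le _).mpr hGC hn
  have hsup : 𝒜.principal a ⊔ X = ⊤ := by
    rw [eq_top_iff]
    intro y _
    obtain ⟨s, cf, hcf, hy⟩ := hR.decompose y
    rw [hy]
    refine sum_mem ?_
    intro δ hδ
    obtain ⟨xx, yy, θ⟩ := δ
    by_cases hyy : yy = f
    · subst yy
      have h1 : cf ⟨xx, f, θ⟩ = 𝒜.mul b (cf ⟨xx, f, θ⟩) +
          𝒜.mul a (𝒜.mul x₀ (cf ⟨xx, f, θ⟩)) := by
        calc cf ⟨xx, f, θ⟩ = 𝒜.mul (𝒜.one f) (cf ⟨xx, f, θ⟩) :=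
              (h𝒜.one_mul θ (hcf _ hδ)).symm
        _ = 𝒜.mul (b + 𝒜.mul a x₀) (cf ⟨xx, f, θ⟩) := by rw [hbdef, sub_add_cancel]
        _ = _ := by rw [h𝒜.right_distrib, h𝒜.mul_assoc]
      rw [h1]
      refine add_mem ?_ ?_
      · exact AddSubgroup.mem_sup_right (AddSubgroup.subset_closure (Or.inl ⟨_, rfl⟩))
      · exact AddSubgroup.mem_sup_left (AddSubgroup.subset_closure ⟨_, rfl⟩)
    · exact AddSubgroup.mem_sup_right
        (AddSubgroup.subset_closure (Or.inr ⟨xx, yy, θ, hyy, hcf _ hδ⟩))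
  have hXtop : X = ⊤ := h2 X hXgr hsup
  have h1f : 𝒜.one f ∈ X := hXtop ▸ AddSubgroup.mem_top _
  set φ : R →+ R := AddMonoidHom.mk' (fun u => 𝒜.mul b u)
    (fun u v => h𝒜.left_distrib b u v) with hφdef
  set T : AddSubgroup R := (𝒜.component (𝟙 f)).map φ with hTdef
  have hproj : ∀ z ∈ X, hR.grProj ⟨f, f, 𝟙 f⟩ z ∈ T := by
    intro z hz
    refine AddSubgroup.closure_induction ?_ ?_ ?_ ?_ hz
    · rintro y (⟨r, rfl⟩ | ⟨g, h', σ, hne, hyσ⟩)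
      · have hps := grProj_smul hR hR (𝟙 f) hb (𝟙 f) r
        rw [Category.comp_id] at hps
        rw [show 𝒜.mul b r = 𝒜.toMod.smul b r from rfl, hps]
        exact AddSubgroup.mem_map.mpr ⟨_, hR.grProj_mem ⟨f, f, 𝟙 f⟩ r, rfl⟩
      · rw [hR.grProj_of_mem_ne hyσ _ (gridx_ne_of_cod_ne hne)]
        exact zero_mem _
    · rw [hR.grProj_zero]; exact zero_mem _
    · intro y z _ _ hy hz; rw [hR.grProj_add]; exact add_mem hy hz
    · intro y _ hy; rw [hR.grProj_neg]; exact neg_mem hy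
  have hfin := hproj (𝒜.one f) h1f
  rw [hR.grProj_of_mem (h𝒜.one_mem f)] at hfin
  obtain ⟨u, hu, huT⟩ := AddSubgroup.mem_map.mp hfin
  exact ⟨u, hu, huT⟩

theorem step34 (h𝒜 : 𝒜.IsObjectUnital) {e f : Γ} (γ : e ⟶ f) {a : R}
    (ha : a ∈ 𝒜.component γ)
    (h3 : ∀ x ∈ 𝒜.component (Groupoid.inv γ), ∃ u ∈ 𝒜.component (𝟙 f),
      𝒜.mul (𝒜.one f - 𝒜.mul a x) u = 𝒜.one f) :
    ∀ x ∈ 𝒜.component (Groupoid.inv γ), ∃ u ∈ 𝒜.component (𝟙 f),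
      𝒜.mul (𝒜.one f - 𝒜.mul a x) u = 𝒜.one f ∧
      𝒜.mul u (𝒜.one f - 𝒜.mul a x) = 𝒜.one f := by
  intro x hx
  have hR : 𝒜.toMod.IsGraded 𝒜 := h𝒜.toMod_isGraded
  obtain ⟨u, hu, hbu⟩ := h3 x hx
  set b : R := 𝒜.one f - 𝒜.mul a x with hbdef
  have hax : 𝒜.mul a x ∈ 𝒜.component (𝟙 f) := by
    have := h𝒜.mul_mem γ (Groupoid.inv γ) ha hx
    rwa [Groupoid.inv_comp] at this
  have hb : b ∈ 𝒜.component (𝟙 f) := sub_mem (h𝒜.one_mem f) hax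
  have hxu : 𝒜.mul x u ∈ 𝒜.component (Groupoid.inv γ) := by
    have := h𝒜.mul_mem (Groupoid.inv γ) (𝟙 f) hx hu
    rwa [Category.id_comp] at this
  have hy : -(𝒜.mul x u) ∈ 𝒜.component (Groupoid.inv γ) := neg_mem hxu
  have hueq : u = 𝒜.one f - 𝒜.mul a (-(𝒜.mul x u)) := by
    have h1 : 𝒜.mul b u = 𝒜.mul (𝒜.one f) u - 𝒜.mul (𝒜.mul a x) u :=
      hR.sub_smul' (𝒜.one f) (𝒜.mul a x) u
    have h2 : u - 𝒜.mul a (𝒜.mul x u) = 𝒜.one f := by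
      rw [← hbu, h1, h𝒜.one_mul (𝟙 f) hu, h𝒜.mul_assoc]
    have h3' : 𝒜.mul a (-(𝒜.mul x u)) = -(𝒜.mul a (𝒜.mul x u)) := hR.smul_neg' a _
    rw [h3', sub_neg_eq_add]
    exact eq_add_of_sub_eq h2
  obtain ⟨v, hv, huv⟩ := h3 _ hy
  rw [← hueq] at huv
  have hveq : v = b := by
    calc v = 𝒜.mul (𝒜.one f) v := (h𝒜.one_mul (𝟙 f) hv).symm
    _ = 𝒜.mul (𝒜.mul b u) v := by rw [hbu]
    _ = 𝒜.mul b (𝒜.mul u v) := h𝒜.mul_assoc b u v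
    _ = 𝒜.mul b (𝒜.one f) := by rw [huv]
    _ = b := h𝒜.mul_one (𝟙 f) hb
  refine ⟨u, hu, hbu, ?_⟩
  rw [← hveq]
  exact huv

theorem step45 (h𝒜 : 𝒜.IsObjectUnital) {e f : Γ} (γ : e ⟶ f) {a : R}
    (ha : a ∈ 𝒜.component γ)
    (h3 : ∀ x ∈ 𝒜.component (Groupoid.inv γ), ∃ u ∈ 𝒜.component (𝟙 f),
      𝒜.mul (𝒜.one f - 𝒜.mul a x) u = 𝒜.one f) :
    ∀ (S : Type u) [AddCommGroup S] (𝒮 : GModData Γ R S),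
      𝒮.IsGraded 𝒜 → 𝒮.IsGrSimple → ∀ s : S, 𝒮.smul s a = 0 := by
  classical
  intro S _ 𝒮 hS hsimple s
  have hR : 𝒜.toMod.IsGraded 𝒜 := h𝒜.toMod_isGraded
  obtain ⟨t, cf, hcf, hs⟩ := hS.decompose s
  rw [hs, hS.sum_smul']
  refine Finset.sum_eq_zero ?_
  intro δ hδ
  obtain ⟨x, y, θ⟩ := δ
  by_cases hx : x = f
  · subst x
    set m : S := cf ⟨f, y, θ⟩ with hmdef
    have hm : m ∈ 𝒮.component θ := hcf _ hδ
    by_contra hma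
    set w : S := 𝒮.smul m a with hwdef
    have hw : w ∈ 𝒮.component (γ ≫ θ) := hS.smul_mem θ γ hm ha
    set G : Set S := {z | ∃ r : R, z = 𝒮.smul w r} with hGdef
    set N : AddSubgroup S := AddSubgroup.closure G with hNdef
    have hwN : w ∈ N :=
      AddSubgroup.subset_closure ⟨𝒜.one e, (hS.smul_one (γ ≫ θ) hw).symm⟩
    have hNsmul : ∀ z ∈ N, ∀ r : R, 𝒮.smul z r ∈ N := by
      intro z hz
      refine AddSubgroup.closure_induction ?_ ?_ ?_ ?_ hz
      · rintro _ ⟨r, rfl⟩ r'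
        rw [← hS.smul_mul]
        exact AddSubgroup.subset_closure ⟨_, rfl⟩
      · intro r; rw [hS.zero_smul']; exact zero_mem _
      · intro p q _ _ hp hq r; rw [hS.add_smul]; exact add_mem (hp r) (hq r)
      · intro p _ hp r; rw [hS.neg_smul']; exact neg_mem (hp r)
    have hNgr : 𝒮.IsGrSub N := by
      refine ⟨hNsmul, ?_⟩
      intro n hn
      have hGC : G ⊆ (AddSubgroup.closure
          {z : S | z ∈ N ∧ 𝒮.IsHomogeneous z} : AddSubgroup S) := by
        rintro _ ⟨r, rfl⟩
        obtain ⟨t', cg, hcg, hr⟩ := hR.decompose r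
        have hsum : 𝒮.smul w r = ∑ δ' ∈ t', 𝒮.smul w (cg δ') := by
          rw [hr]; exact hS.smul_sum' w t' cg
        rw [hsum]
        refine sum_mem ?_
        intro δ' hδ'
        obtain ⟨p, q, ρ⟩ := δ'
        by_cases hq : q = e
        · subst q
          exact AddSubgroup.subset_closure ⟨AddSubgroup.subset_closure ⟨_, rfl⟩,
            p, _, ρ ≫ γ ≫ θ, hS.smul_mem (γ ≫ θ) ρ hw (hcg _ hδ')⟩
        · rw [hS.smul_eq_zero (γ ≫ θ) ρ hq hw (hcg _ hδ')]
          exact zero_mem _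
      exact (AddSubgroup.closure_le _).mpr hGC hn
    have hNtop : N = ⊤ := by
      rcases hsimple.2 N hNgr with hbot | htop
      · exact absurd ((AddSubgroup.eq_bot_iff_forall _).mp hbot w hwN) hma
      · exact htop
    have hmN : m ∈ N := hNtop ▸ AddSubgroup.mem_top m
    have hproj : ∀ z ∈ N, hS.grProj ⟨f, y, θ⟩ z ∈
        (𝒜.component (Groupoid.inv γ)).map
          (AddMonoidHom.mk' (fun r => 𝒮.smul w r) (fun p q => hS.smul_add w p q)) := by
      intro z hz
      refine AddSubgroup.closure_induction ?_ ?_ ?_ ?_ hz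
      · rintro _ ⟨r, rfl⟩
        have hps := grProj_smul hS hR (γ ≫ θ) hw (Groupoid.inv γ) r
        have hidx : Groupoid.inv γ ≫ γ ≫ θ = θ := by
          rw [← Category.assoc, Groupoid.inv_comp, Category.id_comp]
        rw [hidx] at hps
        rw [hps]
        exact AddSubgroup.mem_map.mpr ⟨_, hR.grProj_mem ⟨f, e, Groupoid.inv γ⟩ r, rfl⟩
      · rw [hS.grProj_zero]; exact zero_mem _
      · intro p q _ _ hp hq; rw [hS.grProj_add]; exact add_mem hp hq
      · intro p _ hp; rw [hS.grProj_neg]; exact neg_mem hp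
    have hmT := hproj m hmN
    rw [hS.grProj_of_mem hm] at hmT
    obtain ⟨x₀, hx₀, hx₀eq⟩ := AddSubgroup.mem_map.mp hmT
    have hx₀eq' : 𝒮.smul w x₀ = m := hx₀eq
    have hkill : 𝒮.smul m (𝒜.one f - 𝒜.mul a x₀) = 0 := by
      rw [hS.smul_sub', hS.smul_one θ hm, hS.smul_mul, ← hwdef, hx₀eq', sub_self]
    obtain ⟨u, hu, hbu⟩ := h3 x₀ hx₀
    have hm0 : m = 0 := by
      calc m = 𝒮.smul m (𝒜.one f) := (hS.smul_one θ hm).symm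
      _ = 𝒮.smul m (𝒜.mul (𝒜.one f - 𝒜.mul a x₀) u) := by rw [hbu]
      _ = 𝒮.smul (𝒮.smul m (𝒜.one f - 𝒜.mul a x₀)) u := hS.smul_mul m _ u
      _ = 𝒮.smul 0 u := by rw [hkill]
      _ = 0 := hS.zero_smul' u
    exact absurd (by rw [hwdef, hm0]; exact hS.zero_smul' a) hma
  · exact hS.smul_eq_zero θ γ (fun hc => hx hc.symm) (hcf _ hδ) ha

theorem step51 (h𝒜 : 𝒜.IsObjectUnital) {e f : Γ} (γ : e ⟶ f) {a : R}
    (ha : a ∈ 𝒜.component γ)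
    (h5 : ∀ (S : Type u) [AddCommGroup S] (𝒮 : GModData Γ R S),
      𝒮.IsGraded 𝒜 → 𝒮.IsGrSimple → ∀ s : S, 𝒮.smul s a = 0) :
    a ∈ 𝒜.toMod.grRad := by
  classical
  have hR : 𝒜.toMod.IsGraded 𝒜 := h𝒜.toMod_isGraded
  rw [GModData.grRad]
  refine AddSubgroup.mem_sInf.mpr ?_
  intro N hN
  obtain ⟨hNgr, hNne, hNmax⟩ := hN
  set Q : GModData Γ R (R ⧸ N) := 𝒜.toMod.quot N with hQdef
  have hout : ∀ x : R ⧸ N, QuotientAddGroup.mk (Quotient.out x) = x :=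
    fun x => QuotientAddGroup.out_eq' x
  have hsmul_eq : ∀ (x : R ⧸ N) (r b : R), QuotientAddGroup.mk r = x →
      Q.smul x b = QuotientAddGroup.mk (𝒜.mul r b) := by
    intro x r b hr
    show QuotientAddGroup.mk (𝒜.mul (Quotient.out x) b) = QuotientAddGroup.mk (𝒜.mul r b)
    have h1 : Quotient.out x - r ∈ N :=
      QuotientAddGroup.eq_iff_sub_mem.mp ((hout x).trans hr.symm)
    have h3 : 𝒜.mul (Quotient.out x - r) b ∈ N := hNgr.1 _ h1 b
    have h2 : 𝒜.mul (Quotient.out x) b - 𝒜.mul r b = 𝒜.mul (Quotient.out x - r) b :=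
      (hR.sub_smul' _ _ b).symm
    refine QuotientAddGroup.eq_iff_sub_mem.mpr ?_
    rw [h2]
    exact h3
  have hcomp' : ∀ {g h' : Γ} {σ : g ⟶ h'} {x : R ⧸ N}, x ∈ Q.component σ →
      ∃ r ∈ 𝒜.component σ, QuotientAddGroup.mk r = x := by
    intro g h' σ x hx
    have hx' : x ∈ (𝒜.toMod.component σ).map (QuotientAddGroup.mk' N) := hx
    obtain ⟨r, hr, hrx⟩ := AddSubgroup.mem_map.mp hx'
    exact ⟨r, hr, hrx⟩
  have hQ : Q.IsGraded 𝒜 := by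
    refine ⟨?_, ?_, ?_, ?_, ?_, ?_, ?_, ?_⟩
    · intro m n b
      rw [hsmul_eq (m + n) (Quotient.out m + Quotient.out n) b
          (by rw [QuotientAddGroup.mk_add, hout, hout]),
        hsmul_eq m (Quotient.out m) b (hout m), hsmul_eq n (Quotient.out n) b (hout n),
        h𝒜.right_distrib, QuotientAddGroup.mk_add]
    · intro m b c
      rw [hsmul_eq m (Quotient.out m) (b + c) (hout m),
        hsmul_eq m (Quotient.out m) b (hout m), hsmul_eq m (Quotient.out m) c (hout m),
        h𝒜.left_distrib, QuotientAddGroup.mk_add]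
    · intro m b c
      rw [hsmul_eq m (Quotient.out m) (𝒜.mul b c) (hout m),
        hsmul_eq (Q.smul m b) (𝒜.mul (Quotient.out m) b) c
          (hsmul_eq m (Quotient.out m) b (hout m)).symm,
        h𝒜.mul_assoc]
    · intro x
      obtain ⟨s, cf, hcf, hx⟩ := hR.decompose (Quotient.out x)
      refine ⟨s, fun δ => QuotientAddGroup.mk (cf δ), ?_, ?_⟩
      · intro δ hδ
        exact AddSubgroup.mem_map.mpr ⟨cf δ, hcf δ hδ, rfl⟩
      · rw [← hout x, hx]
        exact map_sum (QuotientAddGroup.mk' N) cf s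
    · intro s cf hcf hsum g hg
      have hchoice : ∀ δ : GrIdx Γ, ∃ r : R, δ ∈ s →
          r ∈ 𝒜.component δ.2.2 ∧ QuotientAddGroup.mk r = cf δ := by
        intro δ
        by_cases hδ : δ ∈ s
        · obtain ⟨r, hr, hrx⟩ := hcomp' (hcf δ hδ)
          exact ⟨r, fun _ => ⟨hr, hrx⟩⟩
        · exact ⟨0, fun hc => absurd hc hδ⟩
      choose b hb using hchoice
      have hzmem : (∑ δ ∈ s, b δ) ∈ N := by
        have hcalc : QuotientAddGroup.mk (∑ δ ∈ s, b δ) = (0 : R ⧸ N) := by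
          calc QuotientAddGroup.mk (∑ δ ∈ s, b δ)
              = ∑ δ ∈ s, (QuotientAddGroup.mk (b δ) : R ⧸ N) :=
                map_sum (QuotientAddGroup.mk' N) b s
          _ = ∑ δ ∈ s, cf δ := Finset.sum_congr rfl (fun δ hδ => (hb δ hδ).2)
          _ = 0 := hsum
        exact (QuotientAddGroup.eq_zero_iff _).mp hcalc
      have hproj : hR.grProj g (∑ δ ∈ s, b δ) = b g := by
        rw [hR.grProj_eq g (fun δ hδ => (hb δ hδ).1) rfl, if_pos hg]
      have hbgN : b g ∈ N := hproj ▸ hR.grProj_mem_of_isGrSub hNgr hzmem g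
      rw [← (hb g hg).2]
      exact (QuotientAddGroup.eq_zero_iff _).mpr hbgN
    · intro e1 f1 g1 σ τ x b hx hb2
      obtain ⟨r, hr, hrx⟩ := hcomp' hx
      rw [hsmul_eq x r b hrx]
      exact AddSubgroup.mem_map.mpr ⟨𝒜.mul r b, h𝒜.mul_mem σ τ hr hb2, rfl⟩
    · intro e1 f1 g1 h1 σ τ x b hne hx hb2
      obtain ⟨r, hr, hrx⟩ := hcomp' hx
      rw [hsmul_eq x r b hrx, h𝒜.mul_eq_zero σ τ hne hr hb2]
      exact map_zero (QuotientAddGroup.mk' N)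
    · intro e1 f1 σ x hx
      obtain ⟨r, hr, hrx⟩ := hcomp' hx
      rw [hsmul_eq x r (𝒜.one e1) hrx, h𝒜.mul_one σ hr]
      exact hrx
  have hQsimple : Q.IsGrSimple := by
    constructor
    · intro hc
      have hex : ∃ r : R, r ∉ N := by
        by_contra hcon
        push_neg at hcon
        exact hNne ((AddSubgroup.eq_top_iff' N).mpr hcon)
      obtain ⟨r, hrN⟩ := hex
      have hmem : (QuotientAddGroup.mk r : R ⧸ N) ∈ (⊥ : AddSubgroup (R ⧸ N)) :=
        hc ▸ AddSubgroup.mem_top _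
      exact hrN ((QuotientAddGroup.eq_zero_iff r).mp (AddSubgroup.mem_bot.mp hmem))
    · intro K hK
      set L : AddSubgroup R := K.comap (QuotientAddGroup.mk' N) with hLdef
      have hmkL : ∀ r : R, r ∈ L ↔ (QuotientAddGroup.mk r : R ⧸ N) ∈ K :=
        fun r => Iff.rfl
      have hNL : N ≤ L := by
        intro n hn
        refine (hmkL n).mpr ?_
        rw [(QuotientAddGroup.eq_zero_iff n).mpr hn]
        exact zero_mem K
      have hLgr : 𝒜.toMod.IsGrSub L := by
        constructor
        · intro m hm r
          have h1 : Q.smul (QuotientAddGroup.mk m) r = QuotientAddGroup.mk (𝒜.mul m r) :=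
            hsmul_eq _ m r rfl
          have h2 : Q.smul (QuotientAddGroup.mk m) r ∈ K := hK.1 _ ((hmkL m).mp hm) r
          exact (hmkL _).mpr (h1 ▸ h2)
        · intro n hn
          obtain ⟨s, cf, hcf, hn'⟩ := hR.decompose n
          have hcfL : ∀ δ ∈ s, cf δ ∈ L := by
            intro δ hδ
            have hmksum : (QuotientAddGroup.mk n : R ⧸ N) =
                ∑ δ' ∈ s, (QuotientAddGroup.mk (cf δ') : R ⧸ N) := by
              rw [hn']; exact map_sum (QuotientAddGroup.mk' N) cf s
            have hprojK : hQ.grProj δ (QuotientAddGroup.mk n : R ⧸ N) ∈ K :=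
              hQ.grProj_mem_of_isGrSub hK ((hmkL n).mp hn) δ
            have hprojeq : hQ.grProj δ (QuotientAddGroup.mk n : R ⧸ N) =
                QuotientAddGroup.mk (cf δ) := by
              rw [hQ.grProj_eq δ
                (fun δ' hδ' => AddSubgroup.mem_map.mpr
                  ⟨cf δ', hcf δ' hδ', QuotientAddGroup.mk'_apply N (cf δ')⟩) hmksum,
                if_pos hδ]
            exact (hmkL _).mpr (hprojeq ▸ hprojK)
          rw [hn']
          refine sum_mem ?_
          intro δ hδ
          exact AddSubgroup.subset_closure ⟨hcfL δ hδ, δ.1, δ.2.1, δ.2.2, hcf δ hδ⟩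
      rcases hNmax L hLgr hNL with hLN | hLtop
      · left
        rw [eq_bot_iff]
        intro x hx
        have h1 : Quotient.out x ∈ L := by
          refine (hmkL _).mpr ?_
          rw [hout x]
          exact hx
        exact AddSubgroup.mem_bot.mpr
          ((hout x).symm.trans ((QuotientAddGroup.eq_zero_iff _).mpr (le_of_eq hLN h1)))
      · right
        rw [eq_top_iff]
        intro x _
        have h1 : Quotient.out x ∈ L := hLtop ▸ AddSubgroup.mem_top _
        have h2 := (hmkL _).mp h1
        rwa [hout x] at h2
  have h0 : Q.smul (QuotientAddGroup.mk (𝒜.one f)) a = 0 :=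
    h5 (R ⧸ N) Q hQ hQsimple _
  rw [hsmul_eq _ (𝒜.one f) a rfl, h𝒜.one_mul γ ha] at h0
  exact (QuotientAddGroup.eq_zero_iff a).mp h0

end Implications

/-- Let `R` be a `Γ`-graded ring, `γ : e ⟶ f` a morphism of
`Γ` and `a ∈ R_γ`. The following are equivalent: (1) `a ∈ rad^gr(R_R)`;
(2) `aR` is gr-superfluous in `R_R`; (3) `1_{r(γ)} - a x` is right invertible in
`R_{r(γ)}` for every `x ∈ R_{γ⁻¹}`; (4) `1_{r(γ)} - a x` is invertible in
`R_{r(γ)}` for every `x ∈ R_{γ⁻¹}`; (5) `S a = 0` for every gr-simple `Γ`-graded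
right `R`-module `S`. -/
theorem mem_grRad_tfae
    {Γ : Type u} [Groupoid.{u} Γ] {R : Type u} [AddCommGroup R]
    (𝒜 : GRingData Γ R) (h𝒜 : 𝒜.IsObjectUnital)
    {e f : Γ} (γ : e ⟶ f) (a : R) (ha : a ∈ 𝒜.component γ) :
    List.TFAE [
      a ∈ 𝒜.toMod.grRad,
      𝒜.toMod.GrSuperfluous (𝒜.principal a),
      ∀ x ∈ 𝒜.component (Groupoid.inv γ), ∃ u ∈ 𝒜.component (𝟙 f),
        𝒜.mul (𝒜.one f - 𝒜.mul a x) u = 𝒜.one f,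
      ∀ x ∈ 𝒜.component (Groupoid.inv γ), ∃ u ∈ 𝒜.component (𝟙 f),
        𝒜.mul (𝒜.one f - 𝒜.mul a x) u = 𝒜.one f ∧
        𝒜.mul u (𝒜.one f - 𝒜.mul a x) = 𝒜.one f,
      ∀ (S : Type u) [AddCommGroup S] (𝒮 : GModData Γ R S),
        𝒮.IsGraded 𝒜 → 𝒮.IsGrSimple → ∀ s : S, 𝒮.smul s a = 0 ] := by
  tfae_have 1 → 2 := step12 h𝒜
  tfae_have 2 → 3 := step23 h𝒜 γ ha
  tfae_have 3 → 4 := step34 h𝒜 γ ha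
  tfae_have 4 → 3 := by
    intro h4 x hx
    obtain ⟨u, hu, h1, _⟩ := h4 x hx
    exact ⟨u, hu, h1⟩
  tfae_have 3 → 5 := step45 h𝒜 γ ha
  tfae_have 5 → 1 := step51 h𝒜 γ ha
  tfae_finish
end
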